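/- arXiv:1609.01999 — 2 statements merged into one kernel-verified Lean document; each statement's English description precedes it below -/
import Mathlib

section
/- Let A, B_1, ..., B_m be self-adjoint d×d matrices and p_1,...,p_m nonnegative weights summing to 1. Then λ(A) ≺ sum_l p_l λ(B_l) (majorization, i.e., weak majorization plus equality of total sums) holds if and only if for every convex function f : R → [0,∞) and every unitarily invariant norm ‖·‖, ‖f(A)‖ ≤ sum_l p_l ‖f(B_l)‖. -/
open scoped BigOperators ComplexOrder

/-- The eigenvalues of a Hermitian matrix arranged in decreasing order
(counting multiplicities). -/
noncomputable def eigDesc {d : ℕ} {A : Matrix (Fin d) (Fin d) ℂ} (hA : A.IsHermitian) :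
    Fin d → ℝ :=
  fun i => (hA.eigenvalues ∘ Tuple.sort hA.eigenvalues) i.rev

/-- Functional calculus for a Hermitian matrix: apply `f` to the eigenvalues in the
spectral decomposition. -/
noncomputable def herFun {d : ℕ} {A : Matrix (Fin d) (Fin d) ℂ} (hA : A.IsHermitian)
    (f : ℝ → ℝ) : Matrix (Fin d) (Fin d) ℂ :=
  (hA.eigenvectorUnitary : Matrix (Fin d) (Fin d) ℂ) *
    Matrix.diagonal (fun i => (f (hA.eigenvalues i) : ℂ)) *
    star (hA.eigenvectorUnitary : Matrix (Fin d) (Fin d) ℂ)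

/-- A unitarily invariant norm on `d × d` complex matrices: a norm `N` with
`N (U X V) = N X` for all unitaries `U, V`. -/
structure UINorm (d : ℕ) where
  N : Matrix (Fin d) (Fin d) ℂ → ℝ
  add_le : ∀ X Y, N (X + Y) ≤ N X + N Y
  smul_eq : ∀ (c : ℂ) X, N (c • X) = ‖c‖ * N X
  pos_of_ne : ∀ X : Matrix (Fin d) (Fin d) ℂ, X ≠ 0 → (0:ℝ) < N X
  unitary_inv : ∀ U V X, U ∈ Matrix.unitaryGroup (Fin d) ℂ →
    V ∈ Matrix.unitaryGroup (Fin d) ℂ → N (U * X * V) = N X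

/-- Compatibility: the complex absolute value as an `AbsoluteValue`. -/
noncomputable def Complex.abs : AbsoluteValue ℂ ℝ where
  toFun := fun z => ‖z‖
  map_mul' := norm_mul
  nonneg' := norm_nonneg
  eq_zero' := fun _ => norm_eq_zero
  add_le' := norm_add_le

lemma Complex.norm_eq_abs (z : ℂ) : ‖z‖ = Complex.abs z := rfl

lemma Complex.sq_abs (z : ℂ) : Complex.abs z ^ 2 = Complex.normSq z := Complex.sq_norm z

lemma Complex.abs_ofReal (r : ℝ) : Complex.abs (r : ℂ) = |r| := by
  rw [← Complex.norm_eq_abs, Complex.norm_real, Real.norm_eq_abs]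


namespace MajAux

variable {d : ℕ}

noncomputable def permM (e : Equiv.Perm (Fin d)) : Matrix (Fin d) (Fin d) ℂ :=
  (1 : Matrix (Fin d) (Fin d) ℂ).submatrix e id

lemma permM_mul (e : Equiv.Perm (Fin d)) (X : Matrix (Fin d) (Fin d) ℂ) :
    permM e * X = X.submatrix e id := by
  ext i j
  simp [permM, Matrix.mul_apply, Matrix.one_apply]

lemma star_permM (e : Equiv.Perm (Fin d)) :
    star (permM e) = (1 : Matrix (Fin d) (Fin d) ℂ).submatrix id e := by
  ext i j
  simp [permM, Matrix.star_apply, Matrix.one_apply, eq_comm]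

lemma mul_permN (e : Equiv.Perm (Fin d)) (X : Matrix (Fin d) (Fin d) ℂ) :
    X * (1 : Matrix (Fin d) (Fin d) ℂ).submatrix id e = X.submatrix id e := by
  ext i j
  simp [Matrix.mul_apply, Matrix.one_apply]

lemma permM_mem (e : Equiv.Perm (Fin d)) : permM e ∈ Matrix.unitaryGroup (Fin d) ℂ := by
  rw [Matrix.mem_unitaryGroup_iff, star_permM, mul_permN]
  ext i j
  simp [permM, Matrix.one_apply]

lemma permM_diag_conj (e : Equiv.Perm (Fin d)) (v : Fin d → ℂ) :
    permM e * Matrix.diagonal v * star (permM e) = Matrix.diagonal (v ∘ e) := by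
  rw [star_permM, permM_mul, mul_permN]
  ext i j
  by_cases h : i = j
  · subst h; simp [Matrix.diagonal_apply]
  · simp [Matrix.diagonal_apply, h, fun h' => h (e.injective h')]

lemma N_diag_comp (Φ : UINorm d) (v : Fin d → ℂ) (e : Equiv.Perm (Fin d)) :
    Φ.N (Matrix.diagonal (v ∘ e)) = Φ.N (Matrix.diagonal v) := by
  rw [← permM_diag_conj]
  exact Φ.unitary_inv _ _ _ (permM_mem e) (Unitary.star_mem (permM_mem e))

lemma N_zero (Φ : UINorm d) : Φ.N 0 = 0 := by
  have := Φ.smul_eq 0 0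
  simpa using this

lemma N_nonneg (Φ : UINorm d) (X : Matrix (Fin d) (Fin d) ℂ) : 0 ≤ Φ.N X := by
  have h1 : Φ.N (-X) = Φ.N X := by
    have := Φ.smul_eq (-1) X
    simpa using this
  have h2 := Φ.add_le X (-X)
  simp [N_zero, h1] at h2
  linarith

lemma N_smul_real (Φ : UINorm d) (r : ℝ) (hr : 0 ≤ r) (X : Matrix (Fin d) (Fin d) ℂ) :
    Φ.N ((r : ℂ) • X) = r * Φ.N X := by
  rw [Φ.smul_eq]
  simp [Real.norm_eq_abs, abs_of_nonneg hr]

lemma N_sum_smul_le' {m : ℕ} (Φ : UINorm d) (p : Fin m → ℝ) (hp : ∀ l, 0 ≤ p l)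
    (X : Fin m → Matrix (Fin d) (Fin d) ℂ) (s : Finset (Fin m)) :
    Φ.N (∑ l ∈ s, (p l : ℂ) • X l) ≤ ∑ l ∈ s, p l * Φ.N (X l) := by
  classical
  induction s using Finset.induction with
  | empty => simp [N_zero]
  | @insert j s hns ih =>
    rw [Finset.sum_insert hns, Finset.sum_insert hns]
    calc Φ.N ((p j : ℂ) • X j + ∑ l ∈ s, (p l : ℂ) • X l)
        ≤ Φ.N ((p j : ℂ) • X j) + Φ.N (∑ l ∈ s, (p l : ℂ) • X l) := Φ.add_le _ _
      _ ≤ p j * Φ.N (X j) + ∑ l ∈ s, p l * Φ.N (X l) := by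
          rw [N_smul_real Φ _ (hp j)]; exact add_le_add le_rfl ih

lemma N_sum_smul_le {m : ℕ} (Φ : UINorm d) (p : Fin m → ℝ) (hp : ∀ l, 0 ≤ p l)
    (X : Fin m → Matrix (Fin d) (Fin d) ℂ) :
    Φ.N (∑ l, (p l : ℂ) • X l) ≤ ∑ l, p l * Φ.N (X l) :=
  N_sum_smul_le' Φ p hp X Finset.univ

/-- One-coordinate step: shrinking one nonneg diagonal entry doesn't increase a UI norm. -/
lemma N_diag_update (Φ : UINorm d) (b : Fin d → ℝ) (j : Fin d) (r : ℝ)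
    (hr0 : 0 ≤ r) (hrb : r ≤ b j) :
    Φ.N (Matrix.diagonal fun i => ((Function.update b j r i : ℝ) : ℂ)) ≤
    Φ.N (Matrix.diagonal fun i => (b i : ℂ)) := by
  by_cases hbj : b j = 0
  · have : Function.update b j r = b := by
      funext i
      by_cases h : i = j
      · subst h; simp [Function.update_self, le_antisymm (hbj ▸ hrb) hr0, hbj]
      · simp [Function.update_of_ne h]
    rw [this]
  · have hbj' : 0 < b j := lt_of_le_of_ne (le_trans hr0 hrb) (Ne.symm hbj)
    set t : ℝ := r / b j with ht
    have ht0 : 0 ≤ t := div_nonneg hr0 hbj'.le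
    have ht1 : t ≤ 1 := (div_le_one hbj').mpr hrb
    set s : ℝ := (1 + t) / 2 with hs
    have hs0 : 0 ≤ s := by positivity
    have hs1 : 1 - s = (1 - t) / 2 := by rw [hs]; ring
    have hs1' : 0 ≤ 1 - s := by rw [hs1]; linarith
    set E : Matrix (Fin d) (Fin d) ℂ := Matrix.diagonal (fun i => if i = j then (-1 : ℂ) else 1)
      with hE
    have hstarE : star E = E := by
      ext i i'
      by_cases h : i = i'
      · subst h; by_cases hj : i = j <;> simp [hE, Matrix.star_apply, Matrix.diagonal_apply_eq, hj]
      · simp [hE, Matrix.star_apply, Matrix.diagonal_apply_ne, h, Ne.symm h]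
    have hEU : E ∈ Matrix.unitaryGroup (Fin d) ℂ := by
      rw [Matrix.mem_unitaryGroup_iff, hstarE, hE, Matrix.diagonal_mul_diagonal]
      ext i i'
      by_cases h : i = i'
      · subst h; by_cases hj : i = j <;> simp [Matrix.diagonal_apply_eq, hj, Matrix.one_apply]
      · simp [Matrix.diagonal_apply_ne, h, Matrix.one_apply, h]
    have key : Matrix.diagonal (fun i => ((Function.update b j r i : ℝ) : ℂ)) =
        (s : ℂ) • Matrix.diagonal (fun i => (b i : ℂ)) +
        ((1 - s : ℝ) : ℂ) • (E * Matrix.diagonal (fun i => (b i : ℂ)) * 1) := by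
      rw [mul_one, hE, Matrix.diagonal_mul_diagonal]
      ext i i'
      by_cases h : i = i'
      · subst h
        by_cases hj : i = j
        · subst hj
          simp only [Matrix.add_apply, Matrix.smul_apply, Matrix.diagonal_apply_eq,
            Function.update_self, if_pos rfl, smul_eq_mul]
          have hr : r = s * b i + (1 - s) * (-1 * b i) := by
            rw [hs, ht]; field_simp; ring
          rw [hr]; push_cast; ring
        · simp only [Matrix.add_apply, Matrix.smul_apply, Matrix.diagonal_apply_eq,
            Function.update_of_ne hj, if_neg hj, smul_eq_mul]
          push_cast; ring
      · simp [Matrix.diagonal_apply_ne, h]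
    calc Φ.N (Matrix.diagonal fun i => ((Function.update b j r i : ℝ) : ℂ))
        = Φ.N ((s : ℂ) • Matrix.diagonal (fun i => (b i : ℂ)) +
            ((1 - s : ℝ) : ℂ) • (E * Matrix.diagonal (fun i => (b i : ℂ)) * 1)) := by rw [key]
      _ ≤ Φ.N ((s : ℂ) • Matrix.diagonal (fun i => (b i : ℂ))) +
            Φ.N (((1 - s : ℝ) : ℂ) • (E * Matrix.diagonal (fun i => (b i : ℂ)) * 1)) :=
          Φ.add_le _ _
      _ = s * Φ.N (Matrix.diagonal (fun i => (b i : ℂ))) +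
            (1 - s) * Φ.N (E * Matrix.diagonal (fun i => (b i : ℂ)) * 1) := by
          rw [N_smul_real Φ s hs0, N_smul_real Φ (1 - s) hs1']
      _ = s * Φ.N (Matrix.diagonal (fun i => (b i : ℂ))) +
            (1 - s) * Φ.N (Matrix.diagonal (fun i => (b i : ℂ))) := by
          rw [Φ.unitary_inv E 1 _ hEU (Submonoid.one_mem _)]
      _ = Φ.N (Matrix.diagonal (fun i => (b i : ℂ))) := by ring

lemma N_diag_mono_aux (Φ : UINorm d) (s : Finset (Fin d)) :
    ∀ a b : Fin d → ℝ, (∀ i, 0 ≤ a i) → (∀ i, a i ≤ b i) → (∀ i ∉ s, a i = b i) →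
    Φ.N (Matrix.diagonal fun i => (a i : ℂ)) ≤ Φ.N (Matrix.diagonal fun i => (b i : ℂ)) := by
  classical
  induction s using Finset.induction with
  | empty =>
    intro a b _ _ hoff
    have : a = b := funext fun i => hoff i (Finset.notMem_empty i)
    rw [this]
  | @insert j s hns ih =>
    intro a b ha hab hoff
    set c : Fin d → ℝ := Function.update b j (a j) with hc
    have hac : ∀ i, a i ≤ c i := by
      intro i
      by_cases h : i = j
      · subst h; simp [hc, Function.update_self]
      · simp [hc, Function.update_of_ne h, hab i]
    have step1 : Φ.N (Matrix.diagonal fun i => (a i : ℂ)) ≤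
        Φ.N (Matrix.diagonal fun i => (c i : ℂ)) := by
      apply ih a c ha hac
      intro i hi
      by_cases h : i = j
      · subst h; simp [hc, Function.update_self]
      · have : i ∉ insert j s := by simp [h, hi]
        simp [hc, Function.update_of_ne h, hoff i this]
    exact step1.trans (N_diag_update Φ b j (a j) (ha j) (hab j))

/-- Entrywise monotonicity of UI norms on nonnegative real diagonals. -/
lemma N_diag_mono (Φ : UINorm d) {a b : Fin d → ℝ} (ha : ∀ i, 0 ≤ a i)
    (hab : ∀ i, a i ≤ b i) :
    Φ.N (Matrix.diagonal fun i => (a i : ℂ)) ≤ Φ.N (Matrix.diagonal fun i => (b i : ℂ)) :=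
  N_diag_mono_aux Φ Finset.univ a b ha hab (fun i hi => absurd (Finset.mem_univ i) hi)


end MajAux

namespace MajHLP
variable {d : ℕ}

/-- prefix sums of the first `n` coordinates -/
noncomputable def Pn (v : Fin d → ℝ) (n : ℕ) : ℝ :=
  ∑ i ∈ Finset.univ.filter (fun i : Fin d => (i : ℕ) < n), v i

def Maj (x y : Fin d → ℝ) : Prop :=
  (∀ n : ℕ, Pn x n ≤ Pn y n) ∧ (∑ i, x i = ∑ i, y i)

def Tt (i j : Fin d) (t : ℝ) (v : Fin d → ℝ) : Fin d → ℝ :=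
  fun r => if r = i then t * v i + (1 - t) * v j
    else if r = j then (1 - t) * v i + t * v j else v r

lemma Pn_succ (v : Fin d → ℝ) (n : ℕ) (hn : n < d) :
    Pn v (n + 1) = Pn v n + v ⟨n, hn⟩ := by
  have hins : Finset.univ.filter (fun i : Fin d => (i : ℕ) < n + 1)
      = insert ⟨n, hn⟩ (Finset.univ.filter (fun i : Fin d => (i : ℕ) < n)) := by
    ext i
    simp only [Finset.mem_filter, Finset.mem_univ, true_and, Finset.mem_insert]
    constructor
    · intro h
      rcases Nat.lt_succ_iff_lt_or_eq.mp h with h' | h'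
      · exact Or.inr h'
      · exact Or.inl (Fin.ext h')
    · rintro (rfl | h)
      · exact Nat.lt_succ_self n
      · exact Nat.lt_succ_of_lt h
  have hnot : (⟨n, hn⟩ : Fin d) ∉ Finset.univ.filter (fun i : Fin d => (i : ℕ) < n) := by
    simp
  rw [Pn, hins, Finset.sum_insert hnot, Pn]
  ring

lemma Pn_of_ge (v : Fin d → ℝ) (n : ℕ) (hn : d ≤ n) : Pn v n = ∑ i, v i := by
  rw [Pn, Finset.filter_true_of_mem (fun i _ => lt_of_lt_of_le i.isLt hn)]

lemma sum_diff_eq (y' y : Fin d → ℝ) (j k : Fin d) (hjk : j ≠ k)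
    (hoff : ∀ r, r ≠ j → r ≠ k → y' r = y r) (s : Finset (Fin d)) :
    ∑ r ∈ s, (y' r - y r)
      = (if j ∈ s then y' j - y j else 0) + (if k ∈ s then y' k - y k else 0) := by
  have hfun : ∀ r, y' r - y r
      = (if r = j then y' j - y j else 0) + (if r = k then y' k - y k else 0) := by
    intro r
    by_cases h1 : r = j
    · subst h1; rw [if_pos rfl, if_neg hjk]; ring
    · by_cases h2 : r = k
      · subst h2; rw [if_neg h1, if_pos rfl]; ring
      · rw [if_neg h1, if_neg h2, hoff r h1 h2]; ring
  calc ∑ r ∈ s, (y' r - y r)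
      = ∑ r ∈ s, ((if r = j then y' j - y j else 0) + (if r = k then y' k - y k else 0)) :=
        Finset.sum_congr rfl fun r _ => hfun r
    _ = (∑ r ∈ s, if r = j then y' j - y j else 0)
        + ∑ r ∈ s, if r = k then y' k - y k else 0 := Finset.sum_add_distrib
    _ = _ := by rw [Finset.sum_ite_eq' s j (fun _ => y' j - y j),
          Finset.sum_ite_eq' s k (fun _ => y' k - y k)]

lemma Pn_sub (x y : Fin d → ℝ) (n : ℕ) :
    Pn x n - Pn y n = ∑ i ∈ Finset.univ.filter (fun i : Fin d => (i : ℕ) < n), (x i - y i) := by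
  rw [Pn, Pn, Finset.sum_sub_distrib]


lemma antitone_tweak {d : ℕ} {y y' : Fin d → ℝ} {j k : Fin d} (hy : Antitone y) (hjk : j < k)
    (hoff : ∀ r, r ≠ j → r ≠ k → y' r = y r)
    (hF1 : y' j ≤ y j) (hF2 : y k ≤ y' k) (hF4 : y' k ≤ y' j)
    (hF3 : ∀ i, j < i → i < k → y i ≤ y' j ∧ y' k ≤ y i) :
    Antitone y' := by
  intro a b hab
  show y' b ≤ y' a
  rcases lt_trichotomy a j with ha1 | ha2 | ha3
  · -- a < j
    have hya : y' a = y a := hoff a (ne_of_lt ha1) (ne_of_lt (lt_trans ha1 hjk))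
    rw [hya]
    have hja : y j ≤ y a := hy ha1.le
    rcases lt_trichotomy b j with hb1 | hb2 | hb3
    · rw [hoff b (ne_of_lt hb1) (ne_of_lt (lt_trans hb1 hjk))]
      exact hy hab
    · rw [hb2]; linarith
    · rcases lt_trichotomy b k with hc1 | hc2 | hc3
      · rw [hoff b (ne_of_gt hb3) (ne_of_lt hc1)]
        have := (hF3 b hb3 hc1).1
        linarith
      · rw [hc2]; linarith
      · rw [hoff b (ne_of_gt hb3) (ne_of_gt hc3)]
        have h5 : y b ≤ y k := hy hc3.le
        linarith
  · -- a = j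
    rw [ha2]
    have hjb : j ≤ b := ha2 ▸ hab
    rcases lt_trichotomy b j with hb1 | hb2 | hb3
    · exact absurd (lt_of_le_of_lt hjb hb1) (lt_irrefl _)
    · rw [hb2]
    · rcases lt_trichotomy b k with hc1 | hc2 | hc3
      · rw [hoff b (ne_of_gt hb3) (ne_of_lt hc1)]
        exact (hF3 b hb3 hc1).1
      · rw [hc2]; exact hF4
      · rw [hoff b (ne_of_gt hb3) (ne_of_gt hc3)]
        have h5 : y b ≤ y k := hy hc3.le
        linarith
  · -- j < a
    rcases lt_trichotomy a k with ha4 | ha5 | ha6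
    · -- j < a < k
      have hya : y' a = y a := hoff a (ne_of_gt ha3) (ne_of_lt ha4)
      rw [hya]
      have hFa := hF3 a ha3 ha4
      rcases lt_trichotomy b k with hc1 | hc2 | hc3
      · have hb3 : j < b := lt_of_lt_of_le ha3 hab
        rw [hoff b (ne_of_gt hb3) (ne_of_lt hc1)]
        exact hy hab
      · rw [hc2]; exact hFa.2
      · have hb3 : j < b := lt_of_lt_of_le ha3 hab
        rw [hoff b (ne_of_gt hb3) (ne_of_gt hc3)]
        have h5 : y b ≤ y k := hy hc3.le
        linarith [hFa.2, hF2]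
    · -- a = k
      rw [ha5]
      have hkb : k ≤ b := ha5 ▸ hab
      rcases eq_or_lt_of_le hkb with hb1 | hb2
      · rw [← hb1]
      · rw [hoff b (ne_of_gt (lt_trans hjk hb2)) (ne_of_gt hb2)]
        have h5 : y b ≤ y k := hy hb2.le
        linarith
    · -- k < a
      have hya : y' a = y a := hoff a (ne_of_gt (lt_trans hjk ha6)) (ne_of_gt ha6)
      have hb6 : k < b := lt_of_lt_of_le ha6 hab
      rw [hya, hoff b (ne_of_gt (lt_trans hjk hb6)) (ne_of_gt hb6)]
      exact hy hab

/-- the HLP single-step construction -/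
lemma hlp_step {x y : Fin d → ℝ} (hx : Antitone x) (hy : Antitone y) (hmaj : Maj x y)
    (hne : x ≠ y) :
    ∃ (j k : Fin d) (t : ℝ), 0 ≤ t ∧ t ≤ 1 ∧ j ≠ k ∧
      Antitone (Tt j k t y) ∧ Maj x (Tt j k t y) ∧
      (Finset.univ.filter (fun r => x r ≠ Tt j k t y r)).card
        < (Finset.univ.filter (fun r => x r ≠ y r)).card := by
  classical
  -- the set of indices where x < y
  set J : Finset (Fin d) := Finset.univ.filter (fun i => x i < y i) with hJ
  have hJne : J.Nonempty := by
    by_contra hc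
    rw [Finset.not_nonempty_iff_eq_empty] at hc
    have hge : ∀ i, y i ≤ x i := by
      intro i
      by_contra h
      push_neg at h
      have : i ∈ J := by rw [hJ]; simp [h]
      rw [hc] at this
      exact absurd this (Finset.notMem_empty i)
    have := (Finset.sum_eq_sum_iff_of_le (fun i _ => hge i)).mp hmaj.2.symm
    exact hne (funext fun i => ((this i (Finset.mem_univ i)).symm))
  set j : Fin d := J.max' hJne with hj
  have hjJ : j ∈ J := J.max'_mem hJne
  have hxyj : x j < y j := by
    have := hjJ
    rw [hJ, Finset.mem_filter] at this
    exact this.2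
  have hjmax : ∀ i : Fin d, j < i → y i ≤ x i := by
    intro i hi
    by_contra h
    push_neg at h
    have hiJ : i ∈ J := by rw [hJ]; simp [h]
    exact absurd (J.le_max' i hiJ) (not_le.mpr hi)
  -- K : indices beyond j where y < x
  set K : Finset (Fin d) := Finset.univ.filter (fun i => y i < x i ∧ j < i) with hK
  have hKne : K.Nonempty := by
    by_contra hc
    rw [Finset.not_nonempty_iff_eq_empty] at hc
    have heq : ∀ i : Fin d, j < i → x i = y i := by
      intro i hi
      refine le_antisymm ?_ (hjmax i hi)
      by_contra h
      push_neg at h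
      have : i ∈ K := by rw [hK]; simp [h, hi]
      rw [hc] at this
      exact absurd this (Finset.notMem_empty i)
    -- then total sums disagree with prefix condition at j
    have hjd : (j : ℕ) < d := j.isLt
    have hsplit : ∀ v : Fin d → ℝ, ∑ i, v i = Pn v ((j : ℕ) + 1)
        + ∑ i ∈ Finset.univ.filter (fun i : Fin d => ¬ ((i : ℕ) < (j : ℕ) + 1)), v i := by
      intro v
      rw [Pn, Finset.sum_filter_add_sum_filter_not]
    have htail : ∑ i ∈ Finset.univ.filter (fun i : Fin d => ¬ ((i : ℕ) < (j : ℕ) + 1)), x i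
        = ∑ i ∈ Finset.univ.filter (fun i : Fin d => ¬ ((i : ℕ) < (j : ℕ) + 1)), y i := by
      refine Finset.sum_congr rfl fun i hi => ?_
      rw [Finset.mem_filter] at hi
      refine heq i ?_
      have := hi.2
      rw [Fin.lt_def]
      omega
    have h1 := hmaj.2
    rw [hsplit x, hsplit y, htail] at h1
    have h2 : Pn x ((j : ℕ) + 1) = Pn y ((j : ℕ) + 1) := by linarith
    have h3 : Pn x ((j : ℕ) + 1) = Pn x (j : ℕ) + x j := Pn_succ x (j : ℕ) hjd
    have h4 : Pn y ((j : ℕ) + 1) = Pn y (j : ℕ) + y j := Pn_succ y (j : ℕ) hjd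
    have h5 := hmaj.1 (j : ℕ)
    -- Pn x j ≤ Pn y j  and  Pn x j + x j = Pn y j + y j with x j < y j : contradiction
    rw [h3, h4] at h2
    linarith
  set k : Fin d := K.min' hKne with hk
  have hkK : k ∈ K := K.min'_mem hKne
  have hxyk : y k < x k := by
    have := hkK
    rw [hK, Finset.mem_filter] at this
    exact this.2.1
  have hjk : j < k := by
    have := hkK
    rw [hK, Finset.mem_filter] at this
    exact this.2.2
  have hkmin : ∀ i : Fin d, j < i → i < k → x i = y i := by
    intro i h1 h2
    refine le_antisymm ?_ (hjmax i h1)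
    by_contra h
    push_neg at h
    have hiK : i ∈ K := by rw [hK]; simp [h, h1]
    exact absurd (K.min'_le i hiK) (not_le.mpr h2)
  -- the transfer amount
  set δ : ℝ := min (y j - x j) (x k - y k) with hδ
  have hδpos : 0 < δ := lt_min (by linarith) (by linarith)
  have hδ1 : δ ≤ y j - x j := min_le_left _ _
  have hδ2 : δ ≤ x k - y k := min_le_right _ _
  have hxkj : x k ≤ x j := hx hjk.le
  have hykj : y k < y j := by linarith
  set t : ℝ := 1 - δ / (y j - y k) with ht
  have hyjk0 : 0 < y j - y k := by linarith
  have hδle : δ ≤ y j - y k := by linarith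
  have ht0 : 0 ≤ t := by
    rw [ht]
    have : δ / (y j - y k) ≤ 1 := (div_le_one hyjk0).mpr hδle
    linarith
  have ht1 : t ≤ 1 := by
    rw [ht]
    have : 0 ≤ δ / (y j - y k) := div_nonneg hδpos.le hyjk0.le
    linarith
  have hjkne : j ≠ k := ne_of_lt hjk
  set y' : Fin d → ℝ := Tt j k t y with hy'
  have hy'j : y' j = y j - δ := by
    rw [hy', Tt]
    simp only [if_pos rfl, if_true]
    rw [ht]
    field_simp
    ring
  have hy'k : y' k = y k + δ := by
    rw [hy', Tt]
    simp only [if_neg (Ne.symm hjkne), if_pos rfl, if_true]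
    rw [ht]
    field_simp
    ring
  have hy'o : ∀ r, r ≠ j → r ≠ k → y' r = y r := by
    intro r h1 h2
    rw [hy', Tt]
    simp only [if_neg h1, if_neg h2]
  have hxjy' : x j ≤ y' j := by rw [hy'j]; linarith
  have hy'xk : y' k ≤ x k := by rw [hy'k]; linarith
  refine ⟨j, k, t, ht0, ht1, hjkne, ?_, ?_, ?_⟩
  · -- Antitone y'
    refine antitone_tweak hy hjk hy'o (by show y' j ≤ y j; rw [hy'j]; linarith) (by show y k ≤ y' k; rw [hy'k]; linarith)
      (le_trans hy'xk (le_trans (hx hjk.le) hxjy')) (fun i h1 h2 => ?_)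
    constructor
    · rw [← hkmin i h1 h2]
      exact le_trans (hx h1.le) hxjy'
    · rw [← hkmin i h1 h2]
      exact le_trans hy'xk (hx h2.le)
  · -- Maj x y'
    constructor
    · intro n
      have hPn : Pn y' n = Pn y n + ((if (j : ℕ) < n then -δ else 0)
          + (if (k : ℕ) < n then δ else 0)) := by
        have h1 : Pn y' n - Pn y n
            = ∑ i ∈ Finset.univ.filter (fun i : Fin d => (i : ℕ) < n), (y' i - y i) := by
          rw [Pn, Pn, Finset.sum_sub_distrib]
        rw [sum_diff_eq y' y j k hjkne hy'o] at h1
        have hjm : (j ∈ Finset.univ.filter (fun i : Fin d => (i : ℕ) < n)) ↔ (j : ℕ) < n := by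
          simp
        have hkm : (k ∈ Finset.univ.filter (fun i : Fin d => (i : ℕ) < n)) ↔ (k : ℕ) < n := by
          simp
        rw [hy'j, hy'k] at h1
        by_cases hjn : (j : ℕ) < n
        · by_cases hkn : (k : ℕ) < n
          · rw [if_pos (hjm.mpr hjn), if_pos (hkm.mpr hkn)] at h1
            rw [if_pos hjn, if_pos hkn]
            linarith
          · rw [if_pos (hjm.mpr hjn), if_neg (fun h => hkn (hkm.mp h))] at h1
            rw [if_pos hjn, if_neg hkn]
            linarith
        · by_cases hkn : (k : ℕ) < n
          · exact absurd (lt_trans (by exact_mod_cast hjk) hkn) hjn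
          · rw [if_neg (fun h => hjn (hjm.mp h)), if_neg (fun h => hkn (hkm.mp h))] at h1
            rw [if_neg hjn, if_neg hkn]
            linarith
      rw [hPn]
      by_cases hjn : (j : ℕ) < n
      · by_cases hkn : (k : ℕ) < n
        · rw [if_pos hjn, if_pos hkn]
          have := hmaj.1 n
          linarith
        · rw [if_pos hjn, if_neg hkn]
          -- the interesting regime : j < n ≤ k; need Pn x n ≤ Pn y n - δ
          have hkey : Pn x n - Pn y n ≤ -δ := by
            have hconst : ∀ n', (j : ℕ) + 1 ≤ n' → n' ≤ (k : ℕ) →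
                Pn x n' - Pn y n' = Pn x ((j : ℕ) + 1) - Pn y ((j : ℕ) + 1) := by
              intro n'
              induction n' with
              | zero => intro h1 _; exact absurd h1 (by omega)
              | succ nn ih =>
                intro h1 h2
                rcases Nat.lt_or_ge nn ((j : ℕ) + 1) with hlt | hge
                · have : nn = (j : ℕ) := by omega
                  subst this
                  rfl
                · have hkd2 : (k : ℕ) < d := k.isLt
                  have hnnd : nn < d := by omega
                  have hxy : x ⟨nn, hnnd⟩ = y ⟨nn, hnnd⟩ := by
                    refine hkmin ⟨nn, hnnd⟩ ?_ ?_
                    · rw [Fin.lt_def]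
                      show (j : ℕ) < nn
                      omega
                    · rw [Fin.lt_def]
                      show nn < (k : ℕ)
                      omega
                  rw [Pn_succ x nn hnnd, Pn_succ y nn hnnd, hxy]
                  have := ih (by omega) (by omega)
                  linarith
            have hjn1 : (j : ℕ) + 1 ≤ n := hjn
            have hnk : n ≤ (k : ℕ) := not_lt.mp hkn
            rw [hconst n hjn1 hnk]
            have hjd : (j : ℕ) < d := j.isLt
            have h3 : Pn x ((j : ℕ) + 1) = Pn x (j : ℕ) + x j := Pn_succ x (j : ℕ) hjd
            have h4 : Pn y ((j : ℕ) + 1) = Pn y (j : ℕ) + y j := Pn_succ y (j : ℕ) hjd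
            have h5 := hmaj.1 (j : ℕ)
            rw [h3, h4]
            linarith
          linarith
      · rw [if_neg hjn]
        by_cases hkn : (k : ℕ) < n
        · exact absurd (lt_trans (by exact_mod_cast hjk) hkn) hjn
        · rw [if_neg hkn]
          have := hmaj.1 n
          linarith
    · -- total sums
      have h1 : ∑ r, (y' r - y r) = 0 := by
        rw [sum_diff_eq y' y j k hjkne hy'o Finset.univ, if_pos (Finset.mem_univ j),
          if_pos (Finset.mem_univ k), hy'j, hy'k]
        ring
      have h2 : ∑ r, y' r = ∑ r, y r := by
        rw [← sub_eq_zero, ← Finset.sum_sub_distrib]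
        exact h1
      rw [hmaj.2, h2]
  · -- cardinality decreases
    have hsub : Finset.univ.filter (fun r => x r ≠ y' r)
        ⊆ Finset.univ.filter (fun r => x r ≠ y r) := by
      intro r hr
      rw [Finset.mem_filter] at hr ⊢
      refine ⟨Finset.mem_univ r, ?_⟩
      rcases eq_or_ne r j with rfl | h1
      · exact ne_of_lt hxyj
      · rcases eq_or_ne r k with rfl | h2
        · exact ne_of_gt hxyk
        · rw [← hy'o r h1 h2]
          exact hr.2
    have hssub : Finset.univ.filter (fun r => x r ≠ y' r)
        ⊂ Finset.univ.filter (fun r => x r ≠ y r) := by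
      refine Finset.ssubset_iff_of_subset hsub |>.mpr ?_
      rcases min_cases (y j - x j) (x k - y k) with ⟨hmin, _⟩ | ⟨hmin, _⟩
      · refine ⟨j, ?_, ?_⟩
        · rw [Finset.mem_filter]
          exact ⟨Finset.mem_univ j, ne_of_lt hxyj⟩
        · rw [Finset.mem_filter]
          push_neg
          intro _
          rw [hy'j, hδ, hmin]
          ring
      · refine ⟨k, ?_, ?_⟩
        · rw [Finset.mem_filter]
          exact ⟨Finset.mem_univ k, ne_of_gt hxyk⟩
        · rw [Finset.mem_filter]
          push_neg
          intro _
          rw [hy'k, hδ, hmin]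
          ring
    exact Finset.card_lt_card hssub

/-- Majorization induction: any functional which is monotone under T-transforms
is monotone under majorization (for antitone vectors). -/
lemma maj_le (Φ : (Fin d → ℝ) → ℝ)
    (hT : ∀ (v : Fin d → ℝ) (i j : Fin d) (t : ℝ), 0 ≤ t → t ≤ 1 → i ≠ j →
      Φ (Tt i j t v) ≤ Φ v) :
    ∀ (x y : Fin d → ℝ), Antitone x → Antitone y → Maj x y → Φ x ≤ Φ y := by
  classical
  have main : ∀ n : ℕ, ∀ x y : Fin d → ℝ,
      (Finset.univ.filter (fun r => x r ≠ y r)).card = n →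
      Antitone x → Antitone y → Maj x y → Φ x ≤ Φ y := by
    intro n
    induction n using Nat.strong_induction_on with
    | _ n ih =>
      intro x y hcard hx hy hmaj
      by_cases hne : x = y
      · exact le_of_eq (congrArg Φ hne)
      · obtain ⟨j, k, t, ht0, ht1, hjk, hanti, hmaj', hlt⟩ := hlp_step hx hy hmaj hne
        rw [hcard] at hlt
        calc Φ x ≤ Φ (Tt j k t y) := ih _ hlt x (Tt j k t y) rfl hx hanti hmaj'
          _ ≤ Φ y := hT y j k t ht0 ht1 hjk
  intro x y hx hy hmaj
  exact main _ x y rfl hx hy hmaj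

end MajHLP

namespace MajAux2
open MajAux Pointwise
variable {d : ℕ}

lemma unitary_row_sq {U : Matrix (Fin d) (Fin d) ℂ} (hU : U ∈ Matrix.unitaryGroup (Fin d) ℂ)
    (i : Fin d) : ∑ j, Complex.abs (U i j) ^ 2 = 1 := by
  have h := Matrix.mem_unitaryGroup_iff.mp hU
  have h2 : (U * star U) i i = 1 := by rw [h]; simp [Matrix.one_apply]
  rw [Matrix.mul_apply] at h2
  have h3 : ∑ j, ((Complex.abs (U i j) ^ 2 : ℝ) : ℂ) = 1 := by
    rw [← h2]
    refine Finset.sum_congr rfl fun j _ => ?_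
    rw [Matrix.star_apply, Complex.sq_abs, Complex.star_def, Complex.mul_conj]
  have h4 : ((∑ j, Complex.abs (U i j) ^ 2 : ℝ) : ℂ) = ((1 : ℝ) : ℂ) := by
    push_cast
    simpa using h3
  exact_mod_cast h4

lemma unitary_col_sq {U : Matrix (Fin d) (Fin d) ℂ} (hU : U ∈ Matrix.unitaryGroup (Fin d) ℂ)
    (j : Fin d) : ∑ i, Complex.abs (U i j) ^ 2 = 1 := by
  have h := Matrix.mem_unitaryGroup_iff'.mp hU
  have h2 : (star U * U) j j = 1 := by rw [h]; simp [Matrix.one_apply]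
  rw [Matrix.mul_apply] at h2
  have h3 : ∑ i, ((Complex.abs (U i j) ^ 2 : ℝ) : ℂ) = 1 := by
    rw [← h2]
    refine Finset.sum_congr rfl fun i _ => ?_
    rw [Matrix.star_apply, Complex.sq_abs, Complex.star_def, mul_comm, Complex.mul_conj]
  have h4 : ((∑ i, Complex.abs (U i j) ^ 2 : ℝ) : ℂ) = ((1 : ℝ) : ℂ) := by
    push_cast
    simpa using h3
  exact_mod_cast h4

lemma unitary_entry_le {U : Matrix (Fin d) (Fin d) ℂ} (hU : U ∈ Matrix.unitaryGroup (Fin d) ℂ)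
    (i j : Fin d) : Complex.abs (U i j) ≤ 1 := by
  have h1 := Finset.single_le_sum (f := fun j => Complex.abs (U i j) ^ 2)
    (fun j _ => sq_nonneg _) (Finset.mem_univ j)
  rw [unitary_row_sq hU i] at h1
  nlinarith [AbsoluteValue.nonneg Complex.abs (U i j)]

def kfSet (k : ℕ) (X : Matrix (Fin d) (Fin d) ℂ) : Set ℝ :=
  { r | ∃ U ∈ Matrix.unitaryGroup (Fin d) ℂ, ∃ V ∈ Matrix.unitaryGroup (Fin d) ℂ,
      r = Complex.abs (∑ i ∈ Finset.univ.filter (fun i : Fin d => (i : ℕ) < k), (U * X * V) i i) }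

lemma kfSet_nonempty (k : ℕ) (X : Matrix (Fin d) (Fin d) ℂ) : (kfSet k X).Nonempty :=
  ⟨_, 1, Submonoid.one_mem _, 1, Submonoid.one_mem _, rfl⟩

lemma kfSet_nonneg (k : ℕ) (X : Matrix (Fin d) (Fin d) ℂ) :
    ∀ r ∈ kfSet k X, 0 ≤ r := by
  rintro r ⟨U, hU, V, hV, rfl⟩
  exact AbsoluteValue.nonneg _ _

lemma kfSet_le (k : ℕ) (X : Matrix (Fin d) (Fin d) ℂ) :
    ∀ r ∈ kfSet k X, r ≤ ∑ _i : Fin d, ∑ a, ∑ b, Complex.abs (X a b) := by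
  rintro r ⟨U, hU, V, hV, rfl⟩
  have hentry : ∀ i : Fin d, Complex.abs ((U * X * V) i i) ≤ ∑ a, ∑ b, Complex.abs (X a b) := by
    intro i
    have h1 : (U * X * V) i i = ∑ b, (∑ a, U i a * X a b) * V b i := by
      rw [Matrix.mul_apply]
      refine Finset.sum_congr rfl fun b _ => ?_
      rw [Matrix.mul_apply]
    rw [h1]
    calc Complex.abs (∑ b, (∑ a, U i a * X a b) * V b i)
        ≤ ∑ b, Complex.abs ((∑ a, U i a * X a b) * V b i) := AbsoluteValue.sum_le _ _ _
      _ ≤ ∑ b, ∑ a, Complex.abs (X a b) := by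
          refine Finset.sum_le_sum fun b _ => ?_
          rw [map_mul]
          calc Complex.abs (∑ a, U i a * X a b) * Complex.abs (V b i)
              ≤ (∑ a, Complex.abs (X a b)) * 1 := by
                refine mul_le_mul ?_ (unitary_entry_le hV b i) (AbsoluteValue.nonneg _ _) ?_
                · calc Complex.abs (∑ a, U i a * X a b)
                      ≤ ∑ a, Complex.abs (U i a * X a b) := AbsoluteValue.sum_le _ _ _
                    _ ≤ ∑ a, Complex.abs (X a b) := by
                        refine Finset.sum_le_sum fun a _ => ?_
                        rw [map_mul]
                        calc Complex.abs (U i a) * Complex.abs (X a b)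
                            ≤ 1 * Complex.abs (X a b) :=
                              mul_le_mul_of_nonneg_right (unitary_entry_le hU i a)
                                (AbsoluteValue.nonneg _ _)
                          _ = Complex.abs (X a b) := one_mul _
                · exact Finset.sum_nonneg fun a _ => AbsoluteValue.nonneg _ _
            _ = ∑ a, Complex.abs (X a b) := mul_one _
      _ = ∑ a, ∑ b', Complex.abs (X a b') := Finset.sum_comm
  calc Complex.abs (∑ i ∈ Finset.univ.filter (fun i : Fin d => (i : ℕ) < k), (U * X * V) i i)
      ≤ ∑ i ∈ Finset.univ.filter (fun i : Fin d => (i : ℕ) < k),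
          Complex.abs ((U * X * V) i i) := AbsoluteValue.sum_le _ _ _
    _ ≤ ∑ i ∈ Finset.univ.filter (fun i : Fin d => (i : ℕ) < k),
          (∑ a, ∑ b, Complex.abs (X a b)) := Finset.sum_le_sum fun i _ => hentry i
    _ ≤ ∑ _i : Fin d, ∑ a, ∑ b, Complex.abs (X a b) := by
        refine Finset.sum_le_sum_of_subset_of_nonneg (Finset.filter_subset _ _) ?_
        intro i _ _
        exact Finset.sum_nonneg fun a _ => Finset.sum_nonneg fun b _ => AbsoluteValue.nonneg _ _

lemma kfSet_bddAbove (k : ℕ) (X : Matrix (Fin d) (Fin d) ℂ) : BddAbove (kfSet k X) :=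
  ⟨_, fun r hr => kfSet_le k X r hr⟩

noncomputable def kyfanN (k : ℕ) (X : Matrix (Fin d) (Fin d) ℂ) : ℝ := sSup (kfSet k X)

lemma kyfanN_nonneg (k : ℕ) (X : Matrix (Fin d) (Fin d) ℂ) : 0 ≤ kyfanN k X :=
  le_csSup_of_le (kfSet_bddAbove k X) (kfSet_nonempty k X).choose_spec
    (kfSet_nonneg k X _ (kfSet_nonempty k X).choose_spec)

lemma kyfanN_add_le (k : ℕ) (X Y : Matrix (Fin d) (Fin d) ℂ) :
    kyfanN k (X + Y) ≤ kyfanN k X + kyfanN k Y := by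
  refine csSup_le (kfSet_nonempty k _) ?_
  rintro r ⟨U, hU, V, hV, rfl⟩
  have hsplit : U * (X + Y) * V = U * X * V + U * Y * V := by
    rw [Matrix.mul_add, Matrix.add_mul]
  rw [hsplit]
  have : ∑ i ∈ Finset.univ.filter (fun i : Fin d => (i : ℕ) < k), (U * X * V + U * Y * V) i i
      = (∑ i ∈ Finset.univ.filter (fun i : Fin d => (i : ℕ) < k), (U * X * V) i i)
      + ∑ i ∈ Finset.univ.filter (fun i : Fin d => (i : ℕ) < k), (U * Y * V) i i := by
    simp [Matrix.add_apply, Finset.sum_add_distrib]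
  rw [this]
  calc Complex.abs (_ + _) ≤ Complex.abs _ + Complex.abs _ := AbsoluteValue.add_le _ _ _
    _ ≤ kyfanN k X + kyfanN k Y := by
        refine add_le_add ?_ ?_
        · exact le_csSup (kfSet_bddAbove k X) ⟨U, hU, V, hV, rfl⟩
        · exact le_csSup (kfSet_bddAbove k Y) ⟨U, hU, V, hV, rfl⟩

lemma kfSet_smul (k : ℕ) (c : ℂ) (X : Matrix (Fin d) (Fin d) ℂ) :
    kfSet k (c • X) = ‖c‖ • kfSet k X := by
  ext r
  constructor
  · rintro ⟨U, hU, V, hV, rfl⟩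
    refine ⟨Complex.abs (∑ i ∈ Finset.univ.filter (fun i : Fin d => (i : ℕ) < k),
      (U * X * V) i i), ⟨U, hU, V, hV, rfl⟩, ?_⟩
    have hsm : U * (c • X) * V = c • (U * X * V) := by
      rw [Matrix.mul_smul, Matrix.smul_mul]
    rw [hsm]
    have : ∑ i ∈ Finset.univ.filter (fun i : Fin d => (i : ℕ) < k), (c • (U * X * V)) i i
        = c * ∑ i ∈ Finset.univ.filter (fun i : Fin d => (i : ℕ) < k), (U * X * V) i i := by
      rw [Finset.mul_sum]
      exact Finset.sum_congr rfl fun i _ => by simp [Matrix.smul_apply, smul_eq_mul]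
    simp only [smul_eq_mul]
    rw [this, map_mul, Complex.norm_eq_abs]
  · rintro ⟨s, ⟨U, hU, V, hV, rfl⟩, rfl⟩
    refine ⟨U, hU, V, hV, ?_⟩
    have hsm : U * (c • X) * V = c • (U * X * V) := by
      rw [Matrix.mul_smul, Matrix.smul_mul]
    rw [hsm]
    have : ∑ i ∈ Finset.univ.filter (fun i : Fin d => (i : ℕ) < k), (c • (U * X * V)) i i
        = c * ∑ i ∈ Finset.univ.filter (fun i : Fin d => (i : ℕ) < k), (U * X * V) i i := by
      rw [Finset.mul_sum]
      exact Finset.sum_congr rfl fun i _ => by simp [Matrix.smul_apply, smul_eq_mul]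
    rw [this, map_mul, Complex.norm_eq_abs]
    simp only [smul_eq_mul]

lemma kyfanN_smul (k : ℕ) (c : ℂ) (X : Matrix (Fin d) (Fin d) ℂ) :
    kyfanN k (c • X) = ‖c‖ * kyfanN k X := by
  rw [kyfanN, kfSet_smul, Real.sSup_smul_of_nonneg (norm_nonneg c), smul_eq_mul, kyfanN]

lemma kfSet_unitary (k : ℕ) (U₀ V₀ X : Matrix (Fin d) (Fin d) ℂ)
    (hU₀ : U₀ ∈ Matrix.unitaryGroup (Fin d) ℂ) (hV₀ : V₀ ∈ Matrix.unitaryGroup (Fin d) ℂ) :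
    kfSet k (U₀ * X * V₀) = kfSet k X := by
  ext r
  constructor
  · rintro ⟨U, hU, V, hV, rfl⟩
    refine ⟨U * U₀, mul_mem hU hU₀, V₀ * V, mul_mem hV₀ hV, ?_⟩
    congr 1
    refine Finset.sum_congr rfl fun i _ => ?_
    noncomm_ring
  · rintro ⟨U, hU, V, hV, rfl⟩
    refine ⟨U * star U₀, mul_mem hU (Unitary.star_mem hU₀), star V₀ * V,
      mul_mem (Unitary.star_mem hV₀) hV, ?_⟩
    have h1 : star U₀ * U₀ = 1 := Matrix.mem_unitaryGroup_iff'.mp hU₀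
    have h2 : V₀ * star V₀ = 1 := Matrix.mem_unitaryGroup_iff.mp hV₀
    have hM : U * X * V = U * star U₀ * (U₀ * X * V₀) * (star V₀ * V) := by
      calc U * X * V = U * 1 * X * 1 * V := by noncomm_ring
        _ = U * (star U₀ * U₀) * X * (V₀ * star V₀) * V := by rw [h1, h2]
        _ = U * star U₀ * (U₀ * X * V₀) * (star V₀ * V) := by noncomm_ring
    rw [hM]

lemma kyfanN_unitary (k : ℕ) (U V X : Matrix (Fin d) (Fin d) ℂ)
    (hU : U ∈ Matrix.unitaryGroup (Fin d) ℂ) (hV : V ∈ Matrix.unitaryGroup (Fin d) ℂ) :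
    kyfanN k (U * X * V) = kyfanN k X := by
  rw [kyfanN, kfSet_unitary k U V X hU hV, kyfanN]

lemma signD_mem (j : Fin d) :
    Matrix.diagonal (fun i => if i = j then (-1 : ℂ) else 1) ∈ Matrix.unitaryGroup (Fin d) ℂ := by
  set E : Matrix (Fin d) (Fin d) ℂ := Matrix.diagonal (fun i => if i = j then (-1 : ℂ) else 1)
    with hE
  have hstarE : star E = E := by
    ext i i'
    by_cases h : i = i'
    · subst h; by_cases hj : i = j <;> simp [hE, Matrix.star_apply, Matrix.diagonal_apply_eq, hj]
    · simp [hE, Matrix.star_apply, Matrix.diagonal_apply_ne, h, Ne.symm h]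
  rw [Matrix.mem_unitaryGroup_iff, hstarE, hE, Matrix.diagonal_mul_diagonal]
  ext i i'
  by_cases h : i = i'
  · subst h; by_cases hj : i = j <;> simp [Matrix.diagonal_apply_eq, hj, Matrix.one_apply]
  · simp [Matrix.diagonal_apply_ne, h, Matrix.one_apply, h]

lemma kyfanN_pos (k : ℕ) (hk : 1 ≤ k) (X : Matrix (Fin d) (Fin d) ℂ) (hX : X ≠ 0) :
    0 < kyfanN k X := by
  rcases lt_or_ge 0 (kyfanN k X) with h | h
  · exact h
  · exfalso
    -- all elements of kfSet are zero
    have hall : ∀ r ∈ kfSet k X, r = 0 := fun r hr =>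
      le_antisymm (le_trans (le_csSup (kfSet_bddAbove k X) hr) h) (kfSet_nonneg k X r hr)
    -- get a nonzero entry
    have hex : ∃ a b, X a b ≠ 0 := by
      by_contra hc
      push_neg at hc
      exact hX (by ext a b; simp [hc a b])
    obtain ⟨a, b, hab⟩ := hex
    have hd : 0 < d := a.pos
    set z0 : Fin d := ⟨0, hd⟩ with hz0
    set e : Equiv.Perm (Fin d) := Equiv.swap z0 a with he
    set g : Equiv.Perm (Fin d) := Equiv.swap z0 b with hg
    set Y : Matrix (Fin d) (Fin d) ℂ := X.submatrix e g with hY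
    have hYab : Y z0 z0 = X a b := by simp [hY, he, hg, Matrix.submatrix_apply]
    set E : Matrix (Fin d) (Fin d) ℂ := Matrix.diagonal (fun i => if i = z0 then (-1 : ℂ) else 1)
      with hE
    have hUXV : permM e * X * star (permM g) = Y := by
      rw [star_permM, permM_mul, mul_permN]
      rfl
    have hmem1 : Complex.abs (∑ i ∈ Finset.univ.filter (fun i : Fin d => (i : ℕ) < k), Y i i)
        ∈ kfSet k X := ⟨permM e, permM_mem e, star (permM g), Unitary.star_mem (permM_mem g),
          by rw [hUXV]⟩
    have hmem2 : Complex.abs (∑ i ∈ Finset.univ.filter (fun i : Fin d => (i : ℕ) < k),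
        (Y * E) i i) ∈ kfSet k X := by
      refine ⟨permM e, permM_mem e, star (permM g) * E,
        mul_mem (Unitary.star_mem (permM_mem g)) (signD_mem z0), ?_⟩
      rw [← Matrix.mul_assoc, hUXV]
    have h1 : ∑ i ∈ Finset.univ.filter (fun i : Fin d => (i : ℕ) < k), Y i i = 0 := by
      have := hall _ hmem1
      exact (AbsoluteValue.eq_zero _).mp this
    have h2 : ∑ i ∈ Finset.univ.filter (fun i : Fin d => (i : ℕ) < k), (Y * E) i i = 0 := by
      have := hall _ hmem2
      exact (AbsoluteValue.eq_zero _).mp this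
    have hYE : ∀ i, (Y * E) i i = Y i i * (if i = z0 then (-1 : ℂ) else 1) := by
      intro i
      rw [hE, Matrix.mul_diagonal]
    have hz0mem : z0 ∈ Finset.univ.filter (fun i : Fin d => (i : ℕ) < k) := by
      simp [hz0]
      omega
    have hsub : ∑ i ∈ Finset.univ.filter (fun i : Fin d => (i : ℕ) < k), Y i i
        - ∑ i ∈ Finset.univ.filter (fun i : Fin d => (i : ℕ) < k), (Y * E) i i
        = 2 * Y z0 z0 := by
      rw [← Finset.sum_sub_distrib]
      rw [Finset.sum_eq_single z0]
      · rw [hYE z0, if_pos rfl]; ring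
      · intro i _ hi
        rw [hYE i, if_neg hi]; ring
      · intro h; exact absurd hz0mem h
    rw [h1, h2, sub_zero] at hsub
    rw [hYab] at hsub
    exact hab (by
      have : (2 : ℂ) ≠ 0 := by norm_num
      field_simp at hsub
      exact (mul_eq_zero.mp hsub.symm).resolve_left this)

noncomputable def kyfan (k : ℕ) (hk : 1 ≤ k) : UINorm d where
  N := kyfanN k
  add_le := kyfanN_add_le k
  smul_eq := fun c X => kyfanN_smul k c X
  pos_of_ne := fun X hX => kyfanN_pos k hk X hX
  unitary_inv := fun U V X hU hV => kyfanN_unitary k U V X hU hV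

lemma card_filter_lt (k : ℕ) (hkd : k ≤ d) :
    (Finset.univ.filter (fun i : Fin d => (i : ℕ) < k)).card = k := by
  have : Finset.univ.filter (fun i : Fin d => (i : ℕ) < k)
      = Finset.map ⟨Fin.castLE hkd, Fin.castLE_injective hkd⟩ Finset.univ := by
    ext x
    constructor
    · intro hx
      simp only [Finset.mem_filter] at hx
      exact Finset.mem_map.mpr ⟨⟨(x : ℕ), hx.2⟩, Finset.mem_univ _, Fin.ext rfl⟩
    · intro hx
      obtain ⟨y, -, rfl⟩ := Finset.mem_map.mp hx
      simp only [Finset.mem_filter, Function.Embedding.coeFn_mk]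
      exact ⟨Finset.mem_univ _, y.isLt⟩
  rw [this, Finset.card_map, Finset.card_univ, Fintype.card_fin]

/-- Lower bound: any `k`-selection of diagonal entries is below the Ky Fan value. -/
lemma kyfanN_diag_ge (k : ℕ) (c : Fin d → ℝ) (hc : ∀ i, 0 ≤ c i) (e : Equiv.Perm (Fin d)) :
    ∑ i ∈ Finset.univ.filter (fun i : Fin d => (i : ℕ) < k), c (e i)
      ≤ kyfanN k (Matrix.diagonal fun i => (c i : ℂ)) := by
  set D : Matrix (Fin d) (Fin d) ℂ := Matrix.diagonal fun i => (c i : ℂ) with hD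
  have hmem : Complex.abs (∑ i ∈ Finset.univ.filter (fun i : Fin d => (i : ℕ) < k),
      (permM e * D * star (permM e)) i i) ∈ kfSet k D :=
    ⟨permM e, permM_mem e, star (permM e), Unitary.star_mem (permM_mem e), rfl⟩
  have hval : Complex.abs (∑ i ∈ Finset.univ.filter (fun i : Fin d => (i : ℕ) < k),
      (permM e * D * star (permM e)) i i)
      = ∑ i ∈ Finset.univ.filter (fun i : Fin d => (i : ℕ) < k), c (e i) := by
    rw [hD, permM_diag_conj]
    have : ∑ i ∈ Finset.univ.filter (fun i : Fin d => (i : ℕ) < k),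
        (Matrix.diagonal ((fun i => (c i : ℂ)) ∘ e)) i i
        = ((∑ i ∈ Finset.univ.filter (fun i : Fin d => (i : ℕ) < k), c (e i) : ℝ) : ℂ) := by
      push_cast
      refine Finset.sum_congr rfl fun i _ => ?_
      simp [Matrix.diagonal_apply_eq, Function.comp]
    rw [this, Complex.abs_ofReal,
      abs_of_nonneg (Finset.sum_nonneg fun i _ => hc (e i))]
  rw [← hval]
  exact le_csSup (kfSet_bddAbove k D) hmem

/-- Upper bound: the Ky Fan value of a nonneg diagonal is at most the sum of the
`k` largest entries (given an antitone enumeration `dvec` of the entries). -/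
lemma kyfanN_diag_le (k : ℕ) (hkd : k ≤ d) (c dvec : Fin d → ℝ) (hc : ∀ i, 0 ≤ c i)
    (hmono : Antitone dvec) (σ : Equiv.Perm (Fin d)) (hcd : ∀ i, c i = dvec (σ i)) :
    kyfanN k (Matrix.diagonal fun i => (c i : ℂ))
      ≤ ∑ i ∈ Finset.univ.filter (fun i : Fin d => (i : ℕ) < k), dvec i := by
  classical
  set F := Finset.univ.filter (fun i : Fin d => (i : ℕ) < k) with hF
  refine csSup_le (kfSet_nonempty _ _) ?_
  rintro r ⟨U, hU, V, hV, rfl⟩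
  set w : Fin d → ℝ := fun j => ∑ i ∈ F, Complex.abs (U i j) * Complex.abs (V j i) with hw
  have hw0 : ∀ j, 0 ≤ w j := fun j => Finset.sum_nonneg fun i _ =>
    mul_nonneg (AbsoluteValue.nonneg _ _) (AbsoluteValue.nonneg _ _)
  -- Step A : r ≤ ∑ j, c j * w j
  have hA : Complex.abs (∑ i ∈ F, (U * Matrix.diagonal (fun i => (c i : ℂ)) * V) i i)
      ≤ ∑ j, c j * w j := by
    have hentry : ∀ i, (U * Matrix.diagonal (fun i => (c i : ℂ)) * V) i i
        = ∑ j, U i j * (c j : ℂ) * V j i := by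
      intro i
      rw [Matrix.mul_apply]
      refine Finset.sum_congr rfl fun j _ => ?_
      rw [Matrix.mul_diagonal]
    calc Complex.abs (∑ i ∈ F, (U * Matrix.diagonal (fun i => (c i : ℂ)) * V) i i)
        ≤ ∑ i ∈ F, Complex.abs ((U * Matrix.diagonal (fun i => (c i : ℂ)) * V) i i) :=
          AbsoluteValue.sum_le _ _ _
      _ ≤ ∑ i ∈ F, ∑ j, c j * (Complex.abs (U i j) * Complex.abs (V j i)) := by
          refine Finset.sum_le_sum fun i _ => ?_
          rw [hentry i]
          calc Complex.abs (∑ j, U i j * (c j : ℂ) * V j i)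
              ≤ ∑ j, Complex.abs (U i j * (c j : ℂ) * V j i) := AbsoluteValue.sum_le _ _ _
            _ = ∑ j, c j * (Complex.abs (U i j) * Complex.abs (V j i)) := by
                refine Finset.sum_congr rfl fun j _ => ?_
                rw [map_mul, map_mul, Complex.abs_ofReal, abs_of_nonneg (hc j)]
                ring
      _ = ∑ j, c j * w j := by
          rw [Finset.sum_comm]
          refine Finset.sum_congr rfl fun j _ => ?_
          rw [hw, Finset.mul_sum]
  -- Step B : w j ≤ 1
  have hB : ∀ j, w j ≤ 1 := by
    intro j
    have hcs := Finset.sum_mul_sq_le_sq_mul_sq F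
      (fun i => Complex.abs (U i j)) (fun i => Complex.abs (V j i))
    have h1 : ∑ i ∈ F, Complex.abs (U i j) ^ 2 ≤ 1 := by
      rw [← unitary_col_sq hU j]
      exact Finset.sum_le_sum_of_subset_of_nonneg (Finset.filter_subset _ _)
        (fun i _ _ => sq_nonneg _)
    have h2 : ∑ i ∈ F, Complex.abs (V j i) ^ 2 ≤ 1 := by
      rw [← unitary_row_sq hV j]
      exact Finset.sum_le_sum_of_subset_of_nonneg (Finset.filter_subset _ _)
        (fun i _ _ => sq_nonneg _)
    have hsq : w j ^ 2 ≤ 1 := by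
      calc w j ^ 2 ≤ (∑ i ∈ F, Complex.abs (U i j) ^ 2) * ∑ i ∈ F, Complex.abs (V j i) ^ 2 := hcs
        _ ≤ 1 * 1 := by
            refine mul_le_mul h1 h2 (Finset.sum_nonneg fun i _ => sq_nonneg _) ?_
            exact le_trans (Finset.sum_nonneg fun i _ => sq_nonneg _) h1
        _ = 1 := one_mul _
    nlinarith [hw0 j]
  -- Step C : ∑ j, w j ≤ k
  have hC : ∑ j, w j ≤ (k : ℝ) := by
    have hswap : ∑ j, w j = ∑ i ∈ F, ∑ j, Complex.abs (U i j) * Complex.abs (V j i) := by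
      rw [hw]
      exact Finset.sum_comm
    rw [hswap]
    calc ∑ i ∈ F, ∑ j, Complex.abs (U i j) * Complex.abs (V j i)
        ≤ ∑ _i ∈ F, (1 : ℝ) := by
          refine Finset.sum_le_sum fun i _ => ?_
          have hcs := Finset.sum_mul_sq_le_sq_mul_sq Finset.univ
            (fun j => Complex.abs (U i j)) (fun j => Complex.abs (V j i))
          rw [unitary_row_sq hU i, unitary_col_sq hV i, one_mul] at hcs
          have hnn : (0:ℝ) ≤ ∑ j, Complex.abs (U i j) * Complex.abs (V j i) :=
            Finset.sum_nonneg fun j _ =>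
              mul_nonneg (AbsoluteValue.nonneg _ _) (AbsoluteValue.nonneg _ _)
          nlinarith
      _ = ((F.card : ℝ)) := by rw [Finset.sum_const, nsmul_eq_mul, mul_one]
      _ = (k : ℝ) := by rw [hF, card_filter_lt k hkd]
  -- Step D : threshold argument
  set t : ℝ := if h : k < d then dvec ⟨k, h⟩ else 0 with htdef
  have ht0 : 0 ≤ t := by
    rw [htdef]
    split
    · rename_i h
      have := hc (σ.symm ⟨k, h⟩)
      rwa [hcd (σ.symm ⟨k, h⟩), Equiv.apply_symm_apply] at this
    · exact le_rfl
  have hFt : ∀ i ∈ F, t ≤ dvec i := by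
    intro i hi
    rw [hF, Finset.mem_filter] at hi
    rw [htdef]
    split
    · rename_i h
      exact hmono (by simp [Fin.le_def]; omega)
    · rename_i h
      have := hc (σ.symm i)
      rwa [hcd (σ.symm i), Equiv.apply_symm_apply] at this
  have hoffF : ∀ i ∈ Finset.univ.filter (fun i : Fin d => ¬ ((i : ℕ) < k)), dvec i ≤ t := by
    intro i hi
    rw [Finset.mem_filter] at hi
    have hki : k ≤ (i : ℕ) := not_lt.mp hi.2
    have hkd' : k < d := lt_of_le_of_lt hki i.isLt
    rw [htdef, dif_pos hkd']
    exact hmono (by simp [Fin.le_def]; omega)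
  have hstep1 : ∑ j, c j * w j ≤ (∑ j, max (dvec (σ j) - t) 0) + t * (k : ℝ) := by
    have h1 : ∀ j, c j * w j = (c j - t) * w j + t * w j := fun j => by ring
    have h2 : ∑ j, c j * w j = (∑ j, (c j - t) * w j) + t * ∑ j, w j := by
      rw [Finset.mul_sum, ← Finset.sum_add_distrib]
      exact Finset.sum_congr rfl fun j _ => h1 j
    rw [h2]
    refine add_le_add (Finset.sum_le_sum fun j _ => ?_) (mul_le_mul_of_nonneg_left hC ht0)
    rw [← hcd j]
    rcases le_or_gt (c j) t with h | h
    · calc (c j - t) * w j ≤ 0 := mul_nonpos_of_nonpos_of_nonneg (by linarith) (hw0 j)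
        _ ≤ max (c j - t) 0 := le_max_right _ _
    · calc (c j - t) * w j ≤ (c j - t) * 1 :=
          mul_le_mul_of_nonneg_left (hB j) (by linarith)
        _ = c j - t := mul_one _
        _ ≤ max (c j - t) 0 := le_max_left _ _
  have hstep2 : ∑ j, max (dvec (σ j) - t) 0 = ∑ j, max (dvec j - t) 0 :=
    Equiv.sum_comp σ (fun j => max (dvec j - t) 0)
  have hstep3 : ∑ j, max (dvec j - t) 0 = ∑ i ∈ F, (dvec i - t) := by
    rw [← Finset.sum_filter_add_sum_filter_not Finset.univ (fun i : Fin d => (i : ℕ) < k)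
      (fun j => max (dvec j - t) 0)]
    have hz : ∑ i ∈ Finset.univ.filter (fun i : Fin d => ¬ ((i : ℕ) < k)),
        max (dvec i - t) 0 = 0 :=
      Finset.sum_eq_zero fun i hi => max_eq_right (by linarith [hoffF i hi])
    rw [hz, add_zero]
    exact Finset.sum_congr rfl fun i hi => max_eq_left (by linarith [hFt i hi])
  have hstep4 : ∑ i ∈ F, (dvec i - t) = (∑ i ∈ F, dvec i) - t * (k : ℝ) := by
    rw [Finset.sum_sub_distrib, Finset.sum_const, hF, card_filter_lt k hkd,
      nsmul_eq_mul, mul_comm]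
  calc Complex.abs (∑ i ∈ Finset.univ.filter (fun i : Fin d => (i : ℕ) < k),
        (U * Matrix.diagonal (fun i => (c i : ℂ)) * V) i i)
      ≤ ∑ j, c j * w j := hA
    _ ≤ (∑ j, max (dvec (σ j) - t) 0) + t * (k : ℝ) := hstep1
    _ = (∑ i ∈ F, dvec i) - t * (k : ℝ) + t * (k : ℝ) := by rw [hstep2, hstep3, hstep4]
    _ = ∑ i ∈ F, dvec i := by ring


end MajAux2



section Glue
open MajAux MajHLP MajAux2
variable {d : ℕ}

/-- permutation sorting a vector in decreasing order -/
noncomputable def descPerm (c : Fin d → ℝ) : Equiv.Perm (Fin d) :=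
  Equiv.trans Fin.revPerm (Tuple.sort c)

lemma descPerm_apply (c : Fin d → ℝ) (i : Fin d) : descPerm c i = Tuple.sort c i.rev := rfl

lemma anti_descPerm (c : Fin d → ℝ) : Antitone (c ∘ descPerm c) := by
  intro a b hab
  have h1 : b.rev ≤ a.rev := Fin.rev_le_rev.mpr hab
  exact Tuple.monotone_sort c h1

lemma eigDesc_eq {A : Matrix (Fin d) (Fin d) ℂ} (hA : A.IsHermitian) :
    eigDesc hA = hA.eigenvalues ∘ descPerm hA.eigenvalues := by
  funext i
  rfl

lemma eigDesc_anti {A : Matrix (Fin d) (Fin d) ℂ} (hA : A.IsHermitian) :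
    Antitone (eigDesc hA) := by
  rw [eigDesc_eq]
  exact anti_descPerm _

/-- the norm of `f` applied to a Hermitian matrix equals the norm of the
diagonal matrix of `f` of eigenvalues. -/
lemma N_herFun (Φ : UINorm d) {A : Matrix (Fin d) (Fin d) ℂ} (hA : A.IsHermitian) (f : ℝ → ℝ) :
    Φ.N (herFun hA f) = Φ.N (Matrix.diagonal fun i => ((f (hA.eigenvalues i) : ℝ) : ℂ)) := by
  rw [herFun]
  exact Φ.unitary_inv _ _ _ (SetLike.coe_mem _) (Unitary.star_mem (SetLike.coe_mem _))

lemma N_diag_descPerm (Φ : UINorm d) (g : ℝ → ℝ) (c : Fin d → ℝ) (e : Equiv.Perm (Fin d)) :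
    Φ.N (Matrix.diagonal fun i => ((g (c (e i)) : ℝ) : ℂ))
      = Φ.N (Matrix.diagonal fun i => ((g (c i) : ℝ) : ℂ)) := by
  have := N_diag_comp Φ (fun i => ((g (c i) : ℝ) : ℂ)) e
  rw [← this]
  rfl

/-- T-transforms do not increase `N (diag (f ∘ ·))` for convex nonneg `f`. -/
lemma N_Tt_le (Φ : UINorm d) {f : ℝ → ℝ} (hf : ConvexOn ℝ Set.univ f) (hf0 : ∀ x, 0 ≤ f x)
    (v : Fin d → ℝ) (i j : Fin d) (t : ℝ) (ht0 : 0 ≤ t) (ht1 : t ≤ 1) (hij : i ≠ j) :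
    Φ.N (Matrix.diagonal fun r => ((f (MajHLP.Tt i j t v r) : ℝ) : ℂ))
      ≤ Φ.N (Matrix.diagonal fun r => ((f (v r) : ℝ) : ℂ)) := by
  classical
  set a : Fin d → ℝ := fun r => f (v r) with ha
  set w : Fin d → ℝ := fun r => if r = i then t * a i + (1 - t) * a j
    else if r = j then (1 - t) * a i + t * a j else a r with hw
  have hfle : ∀ r, f (MajHLP.Tt i j t v r) ≤ w r := by
    intro r
    rw [hw, MajHLP.Tt]
    by_cases h1 : r = i
    · simp only [if_pos h1]
      have hb : (0:ℝ) ≤ 1 - t := by linarith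
      have habt : t + (1 - t) = 1 := by ring
      have := hf.2 (Set.mem_univ (v i)) (Set.mem_univ (v j)) ht0 hb habt
      simpa using this
    · by_cases h2 : r = j
      · simp only [if_neg h1, if_pos h2]
        have hb : (0:ℝ) ≤ 1 - t := by linarith
        have habt : (1 - t) + t = 1 := by ring
        have := hf.2 (Set.mem_univ (v i)) (Set.mem_univ (v j)) hb ht0 habt
        simpa [mul_comm] using this
      · simp only [if_neg h1, if_neg h2]
        exact le_rfl
  have step1 : Φ.N (Matrix.diagonal fun r => ((f (MajHLP.Tt i j t v r) : ℝ) : ℂ))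
      ≤ Φ.N (Matrix.diagonal fun r => ((w r : ℝ) : ℂ)) :=
    N_diag_mono Φ (fun r => hf0 _) hfle
  have step2 : (Matrix.diagonal fun r => ((w r : ℝ) : ℂ))
      = (t : ℂ) • Matrix.diagonal (fun r => ((a r : ℝ) : ℂ))
        + ((1 - t : ℝ) : ℂ) • Matrix.diagonal (fun r => ((a (Equiv.swap i j r) : ℝ) : ℂ)) := by
    ext r r'
    by_cases h : r = r'
    · subst h
      simp only [Matrix.diagonal_apply_eq, Matrix.add_apply, Matrix.smul_apply, smul_eq_mul]
      simp only [hw]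
      by_cases h1 : r = i
      · subst h1
        rw [if_pos rfl, Equiv.swap_apply_left]
        push_cast
        ring
      · by_cases h2 : r = j
        · subst h2
          rw [if_neg h1, if_pos rfl, Equiv.swap_apply_right]
          push_cast
          ring
        · rw [if_neg h1, if_neg h2, Equiv.swap_apply_of_ne_of_ne h1 h2]
          push_cast
          ring
    · simp [Matrix.diagonal_apply_ne, h]
  have step3 : Φ.N (Matrix.diagonal fun r => ((w r : ℝ) : ℂ))
      ≤ t * Φ.N (Matrix.diagonal fun r => ((a r : ℝ) : ℂ))
        + (1 - t) * Φ.N (Matrix.diagonal fun r => ((a (Equiv.swap i j r) : ℝ) : ℂ)) := by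
    rw [step2]
    refine le_trans (Φ.add_le _ _) ?_
    rw [N_smul_real Φ t ht0, N_smul_real Φ (1 - t) (by linarith)]
  have step4 : Φ.N (Matrix.diagonal fun r => ((a (Equiv.swap i j r) : ℝ) : ℂ))
      = Φ.N (Matrix.diagonal fun r => ((a r : ℝ) : ℂ)) := by
    have := N_diag_comp Φ (fun r => ((a r : ℝ) : ℂ)) (Equiv.swap i j)
    rw [← this]
    rfl
  calc Φ.N (Matrix.diagonal fun r => ((f (MajHLP.Tt i j t v r) : ℝ) : ℂ))
      ≤ Φ.N (Matrix.diagonal fun r => ((w r : ℝ) : ℂ)) := step1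
    _ ≤ t * Φ.N (Matrix.diagonal fun r => ((a r : ℝ) : ℂ))
        + (1 - t) * Φ.N (Matrix.diagonal fun r => ((a (Equiv.swap i j r) : ℝ) : ℂ)) := step3
    _ = Φ.N (Matrix.diagonal fun r => ((a r : ℝ) : ℂ)) := by rw [step4]; ring

end Glue

set_option maxHeartbeats 1000000

/-- **Theorem 3.3, discrete case.** For self-adjoint `A, B l` and weights `p l ≥ 0`
summing to `1`: `λ(A) ≺ ∑ l, p l • λ(B l)` (majorization) holds if and only if for
every convex `f : ℝ → [0,∞)` and every unitarily invariant norm `N`,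
`N (f(A)) ≤ ∑ l, p l * N (f(B l))`. -/
theorem majorization_average_iff_norm_ineq_convex
    {d m : ℕ} {A : Matrix (Fin d) (Fin d) ℂ} (hA : A.IsHermitian)
    {B : Fin m → Matrix (Fin d) (Fin d) ℂ} (hB : ∀ l, (B l).IsHermitian)
    (p : Fin m → ℝ) (hp : ∀ l, 0 ≤ p l) (hp_sum : ∑ l, p l = 1) :
    ((∀ k, k ≤ d →
        ∑ i ∈ Finset.univ.filter (fun i : Fin d => (i : ℕ) < k), eigDesc hA i ≤
        ∑ i ∈ Finset.univ.filter (fun i : Fin d => (i : ℕ) < k), ∑ l, p l * eigDesc (hB l) i) ∧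
      ∑ i, eigDesc hA i = ∑ i, ∑ l, p l * eigDesc (hB l) i)
    ↔ (∀ f : ℝ → ℝ, ConvexOn ℝ Set.univ f → (∀ x, 0 ≤ f x) →
        ∀ Φ : UINorm d, Φ.N (herFun hA f) ≤ ∑ l, p l * Φ.N (herFun (hB l) f)) := by
  classical
  have hsumDesc : ∀ {C : Matrix (Fin d) (Fin d) ℂ} (hC : C.IsHermitian),
      ∑ i, eigDesc hC i = ∑ i, hC.eigenvalues i := by
    intro C hC
    rw [eigDesc_eq hC]
    exact Equiv.sum_comp (descPerm hC.eigenvalues) hC.eigenvalues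
  constructor
  · -- forward direction
    rintro ⟨hpart, htot⟩ f hf hf0 Φ
    set x : Fin d → ℝ := eigDesc hA with hx
    set μ : Fin d → ℝ := fun i => ∑ l, p l * eigDesc (hB l) i with hμ
    have hxanti : Antitone x := eigDesc_anti hA
    have hμanti : Antitone μ := by
      intro a b hab
      exact Finset.sum_le_sum fun l _ =>
        mul_le_mul_of_nonneg_left (eigDesc_anti (hB l) hab) (hp l)
    have hmaj : MajHLP.Maj x μ := by
      constructor
      · intro n
        rcases le_or_gt n d with hn | hn
        · exact hpart n hn
        · rw [MajHLP.Pn_of_ge x n hn.le, MajHLP.Pn_of_ge μ n hn.le]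
          exact le_of_eq htot
      · exact htot
    have h1 : Φ.N (herFun hA f) = Φ.N (Matrix.diagonal fun i => ((f (x i) : ℝ) : ℂ)) := by
      rw [N_herFun Φ hA f]
      exact (N_diag_descPerm Φ f hA.eigenvalues (descPerm hA.eigenvalues)).symm
    have h2 : Φ.N (Matrix.diagonal fun i => ((f (x i) : ℝ) : ℂ))
        ≤ Φ.N (Matrix.diagonal fun i => ((f (μ i) : ℝ) : ℂ)) :=
      MajHLP.maj_le (fun v => Φ.N (Matrix.diagonal fun r => ((f (v r) : ℝ) : ℂ)))
        (fun v i j t ht0 ht1 hij => N_Tt_le Φ hf hf0 v i j t ht0 ht1 hij) x μ hxanti hμanti hmaj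
    set g : Fin d → ℝ := fun i => ∑ l, p l * f (eigDesc (hB l) i) with hg
    have h3 : Φ.N (Matrix.diagonal fun i => ((f (μ i) : ℝ) : ℂ))
        ≤ Φ.N (Matrix.diagonal fun i => ((g i : ℝ) : ℂ)) := by
      refine MajAux.N_diag_mono Φ (fun i => hf0 _) (fun i => ?_)
      have := hf.map_sum_le (t := Finset.univ) (w := p) (p := fun l => eigDesc (hB l) i)
        (fun l _ => hp l) hp_sum (fun l _ => Set.mem_univ _)
      simpa [smul_eq_mul] using this
    have h4 : (Matrix.diagonal fun i => ((g i : ℝ) : ℂ))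
        = ∑ l, (p l : ℂ) • Matrix.diagonal (fun i => ((f (eigDesc (hB l) i) : ℝ) : ℂ)) := by
      ext r r'
      by_cases h : r = r'
      · subst h
        simp only [Matrix.diagonal_apply_eq, Matrix.sum_apply, Matrix.smul_apply, smul_eq_mul,
          hg]
        push_cast
        rfl
      · simp [Matrix.sum_apply, Matrix.diagonal_apply_ne _ h]
    have h5 : Φ.N (Matrix.diagonal fun i => ((g i : ℝ) : ℂ))
        ≤ ∑ l, p l * Φ.N (Matrix.diagonal fun i => ((f (eigDesc (hB l) i) : ℝ) : ℂ)) := by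
      rw [h4]
      exact MajAux.N_sum_smul_le Φ p hp _
    have h6 : ∀ l, Φ.N (Matrix.diagonal fun i => ((f (eigDesc (hB l) i) : ℝ) : ℂ))
        = Φ.N (herFun (hB l) f) := by
      intro l
      rw [N_herFun Φ (hB l) f]
      exact N_diag_descPerm Φ f (hB l).eigenvalues (descPerm (hB l).eigenvalues)
    calc Φ.N (herFun hA f)
        = Φ.N (Matrix.diagonal fun i => ((f (x i) : ℝ) : ℂ)) := h1
      _ ≤ Φ.N (Matrix.diagonal fun i => ((f (μ i) : ℝ) : ℂ)) := h2
      _ ≤ Φ.N (Matrix.diagonal fun i => ((g i : ℝ) : ℂ)) := h3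
      _ ≤ ∑ l, p l * Φ.N (Matrix.diagonal fun i => ((f (eigDesc (hB l) i) : ℝ) : ℂ)) := h5
      _ = ∑ l, p l * Φ.N (herFun (hB l) f) :=
          Finset.sum_congr rfl fun l _ => by rw [h6 l]
  · -- backward direction
    intro H
    -- lower/upper bounds on all eigenvalues
    have hpartial : ∀ k, k ≤ d →
        ∑ i ∈ Finset.univ.filter (fun i : Fin d => (i : ℕ) < k), eigDesc hA i ≤
        ∑ i ∈ Finset.univ.filter (fun i : Fin d => (i : ℕ) < k), ∑ l, p l * eigDesc (hB l) i := by
      intro k hk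
      rcases Nat.eq_zero_or_pos k with rfl | hk1
      · have hflt : Finset.univ.filter (fun i : Fin d => (i : ℕ) < 0) = ∅ :=
          Finset.filter_false_of_mem (fun i _ => Nat.not_lt_zero _)
        rw [hflt]
        simp
      · have hd : 0 < d := lt_of_lt_of_le hk1 hk
        set S : Finset ℝ := (Finset.univ.image (eigDesc hA)) ∪
          (Finset.univ.image fun q : Fin m × Fin d => eigDesc (hB q.1) q.2) with hS
        have hSne : S.Nonempty := ⟨eigDesc hA ⟨0, hd⟩, by
          rw [hS]
          exact Finset.mem_union_left _ (Finset.mem_image_of_mem _ (Finset.mem_univ _))⟩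
        set t0 : ℝ := S.min' hSne with ht0def
        have ht0A : ∀ i, t0 ≤ eigDesc hA i := by
          intro i
          refine S.min'_le (eigDesc hA i) ?_
          rw [hS]
          exact Finset.mem_union_left _ (Finset.mem_image_of_mem _ (Finset.mem_univ i))
        have ht0B : ∀ l i, t0 ≤ eigDesc (hB l) i := by
          intro l i
          refine S.min'_le (eigDesc (hB l) i) ?_
          rw [hS]
          refine Finset.mem_union_right _ ?_
          exact Finset.mem_image.mpr ⟨(l, i), Finset.mem_univ _, rfl⟩
        set f : ℝ → ℝ := fun z => max (z - t0) 0 with hfdef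
        have hconv : ConvexOn ℝ Set.univ f := by
          have hc1 : ConvexOn ℝ Set.univ (fun z : ℝ => z - t0) :=
            (convexOn_id convex_univ).sub (concaveOn_const t0 convex_univ)
          have hc2 : ConvexOn ℝ Set.univ (fun _ : ℝ => (0:ℝ)) := convexOn_const 0 convex_univ
          exact hc1.sup hc2
        have hf0 : ∀ z, 0 ≤ f z := fun z => le_max_right _ _
        have hfmono : Monotone f := fun a b hab => max_le_max (by linarith) le_rfl
        set Φk : UINorm d := MajAux2.kyfan k hk1 with hΦk
        have HH := H f hconv hf0 Φk
        -- lower bound on the A side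
        have hlowA : ∑ i ∈ Finset.univ.filter (fun i : Fin d => (i : ℕ) < k),
            f (eigDesc hA i) ≤ Φk.N (herFun hA f) := by
          rw [N_herFun Φk hA f]
          exact MajAux2.kyfanN_diag_ge k (fun i => f (hA.eigenvalues i)) (fun i => hf0 _)
            (descPerm hA.eigenvalues)
        -- upper bound on each B side
        have hupB : ∀ l, Φk.N (herFun (hB l) f) ≤
            ∑ i ∈ Finset.univ.filter (fun i : Fin d => (i : ℕ) < k), f (eigDesc (hB l) i) := by
          intro l
          rw [N_herFun Φk (hB l) f]
          refine MajAux2.kyfanN_diag_le k hk (fun i => f ((hB l).eigenvalues i))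
            (fun i => f (eigDesc (hB l) i)) (fun i => hf0 _)
            (hfmono.comp_antitone (eigDesc_anti (hB l)))
            ((descPerm (hB l).eigenvalues).symm) (fun i => ?_)
          rw [eigDesc_eq (hB l)]
          simp only [Function.comp_apply, Equiv.apply_symm_apply]
        -- convert f-sums to linear sums
        have hfA : ∀ i, f (eigDesc hA i) = eigDesc hA i - t0 :=
          fun i => max_eq_left (by linarith [ht0A i])
        have hfB : ∀ l i, f (eigDesc (hB l) i) = eigDesc (hB l) i - t0 :=
          fun l i => max_eq_left (by linarith [ht0B l i])
        have hsub : ∀ v : Fin d → ℝ,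
            ∑ i ∈ Finset.univ.filter (fun i : Fin d => (i : ℕ) < k), (v i - t0)
            = (∑ i ∈ Finset.univ.filter (fun i : Fin d => (i : ℕ) < k), v i) - k * t0 := by
          intro v
          rw [Finset.sum_sub_distrib, Finset.sum_const, MajAux2.card_filter_lt k hk,
            nsmul_eq_mul]
        have hchain : (∑ i ∈ Finset.univ.filter (fun i : Fin d => (i : ℕ) < k),
            eigDesc hA i) - k * t0 ≤
            ∑ l, p l * ((∑ i ∈ Finset.univ.filter (fun i : Fin d => (i : ℕ) < k),
              eigDesc (hB l) i) - k * t0) := by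
          calc (∑ i ∈ Finset.univ.filter (fun i : Fin d => (i : ℕ) < k), eigDesc hA i) - k * t0
              = ∑ i ∈ Finset.univ.filter (fun i : Fin d => (i : ℕ) < k), f (eigDesc hA i) := by
                rw [← hsub (eigDesc hA)]
                exact (Finset.sum_congr rfl fun i _ => hfA i).symm
            _ ≤ Φk.N (herFun hA f) := hlowA
            _ ≤ ∑ l, p l * Φk.N (herFun (hB l) f) := HH
            _ ≤ ∑ l, p l * ((∑ i ∈ Finset.univ.filter (fun i : Fin d => (i : ℕ) < k),
                  eigDesc (hB l) i) - k * t0) := by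
                refine Finset.sum_le_sum fun l _ => mul_le_mul_of_nonneg_left ?_ (hp l)
                refine le_trans (hupB l) (le_of_eq ?_)
                rw [← hsub (eigDesc (hB l))]
                exact Finset.sum_congr rfl fun i _ => hfB l i
        have hexp : ∑ l, p l * ((∑ i ∈ Finset.univ.filter (fun i : Fin d => (i : ℕ) < k),
            eigDesc (hB l) i) - k * t0)
            = (∑ l, p l * ∑ i ∈ Finset.univ.filter (fun i : Fin d => (i : ℕ) < k),
              eigDesc (hB l) i) - k * t0 := by
          have hpt : ∀ l, p l * ((∑ i ∈ Finset.univ.filter (fun i : Fin d => (i : ℕ) < k),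
              eigDesc (hB l) i) - k * t0)
              = p l * (∑ i ∈ Finset.univ.filter (fun i : Fin d => (i : ℕ) < k),
                eigDesc (hB l) i) - (k * t0) * p l := fun l => by ring
          rw [Finset.sum_congr rfl (fun l _ => hpt l), Finset.sum_sub_distrib,
            ← Finset.mul_sum, hp_sum, mul_one]
        have hswap : ∑ i ∈ Finset.univ.filter (fun i : Fin d => (i : ℕ) < k),
            ∑ l, p l * eigDesc (hB l) i
            = ∑ l, p l * ∑ i ∈ Finset.univ.filter (fun i : Fin d => (i : ℕ) < k),
              eigDesc (hB l) i := by
          rw [Finset.sum_comm]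
          exact Finset.sum_congr rfl fun l _ => (Finset.mul_sum _ _ _).symm
        rw [hswap]
        rw [hexp] at hchain
        linarith
    refine ⟨hpartial, ?_⟩
    -- total-sum equality
    rcases Nat.eq_zero_or_pos d with hd0 | hd
    · subst hd0
      simp
    · have hfiltuniv : Finset.univ.filter (fun i : Fin d => (i : ℕ) < d) = Finset.univ :=
        Finset.filter_true_of_mem (fun i _ => i.isLt)
      have hle : ∑ i, eigDesc hA i ≤ ∑ i, ∑ l, p l * eigDesc (hB l) i := by
        have := hpartial d le_rfl
        rwa [hfiltuniv] at this
      -- now the reverse inequality using f₂ z = max (t1 - z) 0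
      set S : Finset ℝ := (Finset.univ.image (eigDesc hA)) ∪
        (Finset.univ.image fun q : Fin m × Fin d => eigDesc (hB q.1) q.2) with hS
      have hSne : S.Nonempty := ⟨eigDesc hA ⟨0, hd⟩, by
        rw [hS]
        exact Finset.mem_union_left _ (Finset.mem_image_of_mem _ (Finset.mem_univ _))⟩
      set t1 : ℝ := S.max' hSne with ht1def
      have ht1A : ∀ i, eigDesc hA i ≤ t1 := by
        intro i
        refine S.le_max' (eigDesc hA i) ?_
        rw [hS]
        exact Finset.mem_union_left _ (Finset.mem_image_of_mem _ (Finset.mem_univ i))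
      have ht1B : ∀ l i, eigDesc (hB l) i ≤ t1 := by
        intro l i
        refine S.le_max' (eigDesc (hB l) i) ?_
        rw [hS]
        refine Finset.mem_union_right _ ?_
        exact Finset.mem_image.mpr ⟨(l, i), Finset.mem_univ _, rfl⟩
      -- eigenvalues themselves are bounded by t1
      have ht1A' : ∀ i, hA.eigenvalues i ≤ t1 := by
        intro i
        have : hA.eigenvalues i = eigDesc hA ((descPerm hA.eigenvalues).symm i) := by
          rw [eigDesc_eq hA]
          simp only [Function.comp_apply, Equiv.apply_symm_apply]
        rw [this]
        exact ht1A _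
      have ht1B' : ∀ l i, (hB l).eigenvalues i ≤ t1 := by
        intro l i
        have : (hB l).eigenvalues i = eigDesc (hB l) ((descPerm (hB l).eigenvalues).symm i) := by
          rw [eigDesc_eq (hB l)]
          simp only [Function.comp_apply, Equiv.apply_symm_apply]
        rw [this]
        exact ht1B l _
      set f : ℝ → ℝ := fun z => max (t1 - z) 0 with hfdef
      have hconv : ConvexOn ℝ Set.univ f := by
        have hc1 : ConvexOn ℝ Set.univ (fun z : ℝ => t1 - z) :=
          (convexOn_const t1 convex_univ).sub (concaveOn_id convex_univ)
        have hc2 : ConvexOn ℝ Set.univ (fun _ : ℝ => (0:ℝ)) := convexOn_const 0 convex_univ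
        exact hc1.sup hc2
      have hf0 : ∀ z, 0 ≤ f z := fun z => le_max_right _ _
      set Φd : UINorm d := MajAux2.kyfan d hd with hΦd
      have HH := H f hconv hf0 Φd
      -- lower bound : N (f(A)) ≥ ∑ i, (t1 - λᴬᵢ)
      have hlowA : ∑ i, f (hA.eigenvalues i) ≤ Φd.N (herFun hA f) := by
        rw [N_herFun Φd hA f]
        have := MajAux2.kyfanN_diag_ge d (fun i => f (hA.eigenvalues i)) (fun i => hf0 _)
          (Equiv.refl (Fin d))
        rw [hfiltuniv] at this
        simpa [hΦd, MajAux2.kyfan] using this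
      -- upper bound on each B side
      have hupB : ∀ l, Φd.N (herFun (hB l) f) ≤ ∑ i, f ((hB l).eigenvalues i) := by
        intro l
        rw [N_herFun Φd (hB l) f]
        set c : Fin d → ℝ := fun i => f ((hB l).eigenvalues i) with hc
        have hup := MajAux2.kyfanN_diag_le d le_rfl c (c ∘ descPerm c) (fun i => hf0 _)
          (anti_descPerm c) ((descPerm c).symm) (fun i => by
            simp only [Function.comp_apply, Equiv.apply_symm_apply])
        rw [hfiltuniv] at hup
        refine le_trans hup (le_of_eq ?_)
        exact Equiv.sum_comp (descPerm c) c
      -- convert to linear sums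
      have hfA : ∀ i, f (hA.eigenvalues i) = t1 - hA.eigenvalues i :=
        fun i => max_eq_left (by linarith [ht1A' i])
      have hfB : ∀ l i, f ((hB l).eigenvalues i) = t1 - (hB l).eigenvalues i :=
        fun l i => max_eq_left (by linarith [ht1B' l i])
      have hsumA : ∑ i, f (hA.eigenvalues i) = d * t1 - ∑ i, eigDesc hA i := by
        rw [Finset.sum_congr rfl fun i _ => hfA i, Finset.sum_sub_distrib, Finset.sum_const,
          Finset.card_univ, Fintype.card_fin, nsmul_eq_mul, hsumDesc hA]
      have hsumB : ∀ l, ∑ i, f ((hB l).eigenvalues i) = d * t1 - ∑ i, eigDesc (hB l) i := by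
        intro l
        rw [Finset.sum_congr rfl fun i _ => hfB l i, Finset.sum_sub_distrib, Finset.sum_const,
          Finset.card_univ, Fintype.card_fin, nsmul_eq_mul, hsumDesc (hB l)]
      have hchain2 : (d : ℝ) * t1 - ∑ i, eigDesc hA i
          ≤ ∑ l, p l * ((d : ℝ) * t1 - ∑ i, eigDesc (hB l) i) := by
        calc (d : ℝ) * t1 - ∑ i, eigDesc hA i
            = ∑ i, f (hA.eigenvalues i) := hsumA.symm
          _ ≤ Φd.N (herFun hA f) := hlowA
          _ ≤ ∑ l, p l * Φd.N (herFun (hB l) f) := HH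
          _ ≤ ∑ l, p l * ((d : ℝ) * t1 - ∑ i, eigDesc (hB l) i) := by
              refine Finset.sum_le_sum fun l _ => mul_le_mul_of_nonneg_left ?_ (hp l)
              exact le_trans (hupB l) (le_of_eq (hsumB l))
      have hexp2 : ∑ l, p l * ((d : ℝ) * t1 - ∑ i, eigDesc (hB l) i)
          = (d : ℝ) * t1 - ∑ l, p l * ∑ i, eigDesc (hB l) i := by
        have hpt : ∀ l, p l * ((d : ℝ) * t1 - ∑ i, eigDesc (hB l) i)
            = ((d : ℝ) * t1) * p l - p l * ∑ i, eigDesc (hB l) i := fun l => by ring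
        rw [Finset.sum_congr rfl (fun l _ => hpt l), Finset.sum_sub_distrib,
          ← Finset.mul_sum, hp_sum, mul_one]
      have hswap2 : ∑ i, ∑ l, p l * eigDesc (hB l) i
          = ∑ l, p l * ∑ i, eigDesc (hB l) i := by
        rw [Finset.sum_comm]
        exact Finset.sum_congr rfl fun l _ => (Finset.mul_sum _ _ _).symm
      rw [hswap2]
      rw [hexp2] at hchain2
      rw [hswap2] at hle
      linarith
end

section
/- For positive semi-definite d×d matrices A and B, λ(A) is weakly log-majorized by λ(B) (i.e., prod_{i=1}^k λ_i(A) ≤ prod_{i=1}^k λ_i(B) for all k in [d]) if and only if ‖A^p‖_{(k)} ≤ ‖B^p‖_{(k)} for all p > 0 and all k in [d]. -/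
open scoped BigOperators ComplexOrder
open Finset

/-- Abel summation identity. -/
private lemma abel_aux (c S : ℕ → ℝ) (k : ℕ) :
    ∑ i ∈ range k, c i * (S (i+1) - S i) =
      ∑ i ∈ range k, (c i - c (i+1)) * S (i+1) + c k * S k - c 0 * S 0 := by
  induction k with
  | zero => simp
  | succ n ih => rw [sum_range_succ, sum_range_succ, ih]; ring

/-- Forward direction, all entries positive. -/
private lemma fwd_pos (a b : ℕ → ℝ) (k : ℕ) (ha : Antitone a) (ha0 : ∀ i, 0 ≤ a i)
    (hak : ∀ i < k, 0 < a i) (hbk : ∀ i < k, 0 < b i)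
    (hmaj : ∀ l ≤ k, ∏ i ∈ range l, a i ≤ ∏ i ∈ range l, b i)
    (p : ℝ) (hp : 0 < p) :
    ∑ i ∈ range k, a i ^ p ≤ ∑ i ∈ range k, b i ^ p := by
  set c : ℕ → ℝ := fun i => a i ^ p with hc
  set S : ℕ → ℝ := fun l => Real.log (∏ i ∈ range l, b i) - Real.log (∏ i ∈ range l, a i)
    with hS
  have hprodA : ∀ l ≤ k, 0 < ∏ i ∈ range l, a i := by
    intro l hl
    exact Finset.prod_pos fun i hi => hak i (lt_of_lt_of_le (mem_range.mp hi) hl)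
  have hprodB : ∀ l ≤ k, 0 < ∏ i ∈ range l, b i := by
    intro l hl
    exact Finset.prod_pos fun i hi => hbk i (lt_of_lt_of_le (mem_range.mp hi) hl)
  have hSnn : ∀ l ≤ k, 0 ≤ S l := by
    intro l hl
    have := Real.log_le_log (hprodA l hl) (hmaj l hl)
    simpa [hS] using this
  have hSstep : ∀ i < k, S (i+1) - S i = Real.log (b i) - Real.log (a i) := by
    intro i hi
    have h1 : Real.log (∏ j ∈ range (i+1), a j)
        = Real.log (∏ j ∈ range i, a j) + Real.log (a i) := by
      rw [prod_range_succ, Real.log_mul (ne_of_gt (hprodA i hi.le)) (ne_of_gt (hak i hi))]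
    have h2 : Real.log (∏ j ∈ range (i+1), b j)
        = Real.log (∏ j ∈ range i, b j) + Real.log (b i) := by
      rw [prod_range_succ, Real.log_mul (ne_of_gt (hprodB i hi.le)) (ne_of_gt (hbk i hi))]
    simp only [hS, h1, h2]; ring
  -- key pointwise convexity bound : a i ^ p * (p * (log b i - log a i)) ≤ b i ^ p - a i ^ p
  have hpoint : ∀ i < k, c i * (p * (S (i+1) - S i)) ≤ b i ^ p - a i ^ p := by
    intro i hi
    rw [hSstep i hi]
    have hai := hak i hi
    have hbi := hbk i hi
    have hci : c i = Real.exp (Real.log (a i) * p) := Real.rpow_def_of_pos hai p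
    have hbip : b i ^ p = Real.exp (Real.log (b i) * p) := Real.rpow_def_of_pos hbi p
    have hci2 : a i ^ p = Real.exp (Real.log (a i) * p) := Real.rpow_def_of_pos hai p
    rw [hci, hbip, hci2]
    have h := Real.add_one_le_exp (Real.log (b i) * p - Real.log (a i) * p)
    have h2 : Real.exp (Real.log (a i) * p)
          * ((Real.log (b i) * p - Real.log (a i) * p) + 1)
        ≤ Real.exp (Real.log (a i) * p)
          * Real.exp (Real.log (b i) * p - Real.log (a i) * p) :=
      mul_le_mul_of_nonneg_left h (Real.exp_nonneg _)
    rw [← Real.exp_add] at h2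
    have h3 : Real.log (a i) * p + (Real.log (b i) * p - Real.log (a i) * p)
        = Real.log (b i) * p := by ring
    rw [h3] at h2
    nlinarith [Real.exp_pos (Real.log (a i) * p)]
  -- Abel summation : the weighted sum is nonnegative
  have habel : 0 ≤ ∑ i ∈ range k, c i * (S (i+1) - S i) := by
    rw [abel_aux]
    have hS0 : S 0 = 0 := by simp [hS]
    have hterm : ∀ i ∈ range k, 0 ≤ (c i - c (i+1)) * S (i+1) := by
      intro i hi
      have hi' := mem_range.mp hi
      have hcm : c (i+1) ≤ c i :=
        Real.rpow_le_rpow (ha0 (i+1)) (ha (Nat.le_succ i)) hp.le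
      exact mul_nonneg (sub_nonneg.mpr hcm) (hSnn (i+1) hi')
    have hck : 0 ≤ c k * S k :=
      mul_nonneg (Real.rpow_nonneg (ha0 k) p) (hSnn k le_rfl)
    have := Finset.sum_nonneg hterm
    rw [hS0]
    nlinarith
  have hfinal : 0 ≤ ∑ i ∈ range k, (b i ^ p - a i ^ p) := by
    have hsum : ∑ i ∈ range k, c i * (p * (S (i+1) - S i))
        ≤ ∑ i ∈ range k, (b i ^ p - a i ^ p) :=
      Finset.sum_le_sum fun i hi => hpoint i (mem_range.mp hi)
    have heq : ∑ i ∈ range k, c i * (p * (S (i+1) - S i))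
        = p * ∑ i ∈ range k, c i * (S (i+1) - S i) := by
      rw [Finset.mul_sum]; apply Finset.sum_congr rfl; intro i _; ring
    calc (0:ℝ) = p * 0 := by ring
      _ ≤ p * ∑ i ∈ range k, c i * (S (i+1) - S i) :=
          mul_le_mul_of_nonneg_left habel hp.le
      _ = ∑ i ∈ range k, c i * (p * (S (i+1) - S i)) := heq.symm
      _ ≤ _ := hsum
  rw [Finset.sum_sub_distrib] at hfinal
  linarith

/-- Forward direction in general. -/
private lemma fwd (a b : ℕ → ℝ) (ha : Antitone a) (ha0 : ∀ i, 0 ≤ a i) (hb0 : ∀ i, 0 ≤ b i)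
    (k : ℕ) (hmaj : ∀ l ≤ k, ∏ i ∈ range l, a i ≤ ∏ i ∈ range l, b i)
    (p : ℝ) (hp : 0 < p) :
    ∑ i ∈ range k, a i ^ p ≤ ∑ i ∈ range k, b i ^ p := by
  -- positivity of b forced by positivity of a up to some index
  have hbpos : ∀ m ≤ k, (∀ i < m, 0 < a i) → ∀ i < m, 0 < b i := by
    intro m hm hapos j hj
    rcases lt_or_eq_of_le (hb0 j) with h | h
    · exact h
    · exfalso
      have hb0' : ∏ i ∈ range (j+1), b i = 0 :=
        Finset.prod_eq_zero (mem_range.mpr (Nat.lt_succ_self j)) h.symm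
      have ha0' : 0 < ∏ i ∈ range (j+1), a i :=
        Finset.prod_pos fun i hi => hapos i (lt_of_lt_of_le (mem_range.mp hi) hj)
      have := hmaj (j+1) (le_trans (Nat.succ_le_of_lt hj) hm)
      rw [hb0'] at this
      linarith
  by_cases hpos : ∀ i < k, 0 < a i
  · exact fwd_pos a b k ha ha0 hpos (hbpos k le_rfl hpos) hmaj p hp
  · push_neg at hpos
    obtain ⟨j, hjk, hja⟩ := hpos
    have hja0 : a j = 0 := le_antisymm hja (ha0 j)
    have hex : ∃ n, a n = 0 := ⟨j, hja0⟩
    set m := Nat.find hex with hm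
    have ham : a m = 0 := Nat.find_spec hex
    have hmj : m ≤ j := Nat.find_min' hex hja0
    have hmk : m ≤ k := le_trans hmj hjk.le
    have hapos : ∀ i < m, 0 < a i := by
      intro i hi
      rcases lt_or_eq_of_le (ha0 i) with h | h
      · exact h
      · exact absurd h.symm (Nat.find_min hex hi)
    have hzero : ∀ i, m ≤ i → a i = 0 :=
      fun i hi => le_antisymm (ham ▸ ha hi) (ha0 i)
    have hsa : ∑ i ∈ range k, a i ^ p = ∑ i ∈ range m, a i ^ p := by
      symm
      apply Finset.sum_subset (Finset.range_subset_range.mpr hmk)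
      intro i _ hi
      rw [hzero i (le_of_not_gt fun h => hi (mem_range.mpr h))]
      exact Real.zero_rpow hp.ne'
    have hkey : ∑ i ∈ range m, a i ^ p ≤ ∑ i ∈ range m, b i ^ p :=
      fwd_pos a b m ha ha0 hapos (hbpos m hmk hapos)
        (fun l hl => hmaj l (le_trans hl hmk)) p hp
    have hmono : ∑ i ∈ range m, b i ^ p ≤ ∑ i ∈ range k, b i ^ p :=
      Finset.sum_le_sum_of_subset_of_nonneg (Finset.range_subset_range.mpr hmk)
        (fun i _ _ => Real.rpow_nonneg (hb0 i) p)
    rw [hsa]; exact le_trans hkey hmono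

/-- Reverse direction. -/
private lemma bwd (a b : ℕ → ℝ) (k : ℕ) (ha0 : ∀ i, 0 ≤ a i) (hb0 : ∀ i, 0 ≤ b i)
    (h : ∀ p : ℝ, 0 < p → ∑ i ∈ range k, a i ^ p ≤ ∑ i ∈ range k, b i ^ p) :
    ∏ i ∈ range k, a i ≤ ∏ i ∈ range k, b i := by
  by_cases hpos : ∀ i < k, 0 < a i
  · -- limit as p → 0 along exponents : 0^p = 0, x^p → 1 for x > 0
    have htendA : ∀ x : ℝ, 0 < x →
        Filter.Tendsto (fun p : ℝ => x ^ p) (nhdsWithin 0 (Set.Ioi 0)) (nhds 1) := by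
      intro x hx
      have hcont : Continuous fun p : ℝ => Real.exp (Real.log x * p) := by continuity
      have := hcont.tendsto 0
      simp only [mul_zero, Real.exp_zero] at this
      have heq : (fun p : ℝ => x ^ p) = fun p : ℝ => Real.exp (Real.log x * p) := by
        funext p; exact Real.rpow_def_of_pos hx p
      rw [heq]
      exact this.mono_left nhdsWithin_le_nhds
    have htendZ : Filter.Tendsto (fun p : ℝ => (0:ℝ) ^ p) (nhdsWithin 0 (Set.Ioi 0))
        (nhds 0) := by
      apply Filter.Tendsto.congr' _ tendsto_const_nhds
      filter_upwards [self_mem_nhdsWithin] with p hp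
      exact (Real.zero_rpow (ne_of_gt hp)).symm
    -- first show all b i > 0 for i < k by a counting / limit argument
    have hbpos : ∀ i < k, 0 < b i := by
      by_contra hcon
      push_neg at hcon
      obtain ⟨j, hjk, hjb⟩ := hcon
      have hjb0 : b j = 0 := le_antisymm hjb (hb0 j)
      have hTA : Filter.Tendsto (fun p : ℝ => ∑ i ∈ range k, a i ^ p)
          (nhdsWithin 0 (Set.Ioi 0)) (nhds (k : ℝ)) := by
        have : Filter.Tendsto (fun p : ℝ => ∑ i ∈ range k, a i ^ p)
            (nhdsWithin 0 (Set.Ioi 0)) (nhds (∑ i ∈ range k, (1:ℝ))) :=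
          tendsto_finset_sum _ fun i hi => htendA (a i) (hpos i (mem_range.mp hi))
        simpa using this
      set t : ℝ := ∑ i ∈ range k, (if b i = 0 then (0:ℝ) else 1) with ht
      have hTB : Filter.Tendsto (fun p : ℝ => ∑ i ∈ range k, b i ^ p)
          (nhdsWithin 0 (Set.Ioi 0)) (nhds t) := by
        apply tendsto_finset_sum
        intro i _
        by_cases hbi : b i = 0
        · simp only [hbi, if_pos]
          simpa [hbi] using htendZ
        · simp only [hbi, if_neg, if_false]
          exact htendA (b i) (lt_of_le_of_ne (hb0 i) (Ne.symm hbi))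
      have hle : (k : ℝ) ≤ t := by
        refine le_of_tendsto_of_tendsto hTA hTB ?_
        filter_upwards [self_mem_nhdsWithin] with p hp
        exact h p hp
      have hlt : t < (k : ℝ) := by
        rw [ht]
        calc ∑ i ∈ range k, (if b i = 0 then (0:ℝ) else 1)
            < ∑ i ∈ range k, (1:ℝ) := by
              apply Finset.sum_lt_sum
              · intro i _; split <;> norm_num
              · exact ⟨j, mem_range.mpr hjk, by simp [hjb0]⟩
          _ = (k : ℝ) := by simp
      linarith
    -- derivative argument at p = 0
    set g : ℝ → ℝ := fun p =>
      ∑ i ∈ range k, Real.exp (Real.log (b i) * p)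
        - ∑ i ∈ range k, Real.exp (Real.log (a i) * p) with hg
    have hgeq : ∀ p : ℝ, g p = ∑ i ∈ range k, b i ^ p - ∑ i ∈ range k, a i ^ p := by
      intro p
      simp only [hg]
      congr 1
      · exact Finset.sum_congr rfl fun i hi =>
          (Real.rpow_def_of_pos (hbpos i (mem_range.mp hi)) p).symm
      · exact Finset.sum_congr rfl fun i hi =>
          (Real.rpow_def_of_pos (hpos i (mem_range.mp hi)) p).symm
    have hg0 : g 0 = 0 := by simp [hg]
    set L : ℝ := ∑ i ∈ range k, Real.log (b i) - ∑ i ∈ range k, Real.log (a i) with hL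
    have hderiv : HasDerivAt g L 0 := by
      have haux : ∀ x : ℝ, HasDerivAt (fun p : ℝ => Real.exp (Real.log x * p))
          (Real.log x) 0 := by
        intro x
        have h1 : HasDerivAt (fun p : ℝ => Real.log x * p) (Real.log x) 0 := by
          simpa using (hasDerivAt_id (0:ℝ)).const_mul (Real.log x)
        have := h1.exp
        simpa using this
      exact HasDerivAt.sub
        (HasDerivAt.fun_sum fun i _ => haux (b i))
        (HasDerivAt.fun_sum fun i _ => haux (a i))
    have hLnn : 0 ≤ L := by
      have hd : HasDerivWithinAt g L (Set.Ioi 0) 0 := hderiv.hasDerivWithinAt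
      rw [hasDerivWithinAt_iff_tendsto_slope] at hd
      have hset : Set.Ioi (0:ℝ) \ {0} = Set.Ioi 0 :=
        Set.diff_singleton_eq_self (by simp)
      rw [hset] at hd
      refine ge_of_tendsto hd ?_
      filter_upwards [self_mem_nhdsWithin] with p hp
      have hp0 : (0:ℝ) < p := hp
      have hgp : 0 ≤ g p := by
        rw [hgeq p]
        have := h p hp0
        linarith
      rw [slope_def_field]
      simp only [hg0, sub_zero]
      exact div_nonneg hgp hp0.le
    -- translate back to products
    have hane : ∀ i ∈ range k, a i ≠ 0 :=
      fun i hi => ne_of_gt (hpos i (mem_range.mp hi))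
    have hbne : ∀ i ∈ range k, b i ≠ 0 :=
      fun i hi => ne_of_gt (hbpos i (mem_range.mp hi))
    have hloga : Real.log (∏ i ∈ range k, a i) ≤ Real.log (∏ i ∈ range k, b i) := by
      rw [Real.log_prod hane, Real.log_prod hbne]
      linarith
    have hpa : 0 < ∏ i ∈ range k, a i :=
      Finset.prod_pos fun i hi => hpos i (mem_range.mp hi)
    have hpb : 0 < ∏ i ∈ range k, b i :=
      Finset.prod_pos fun i hi => hbpos i (mem_range.mp hi)
    calc ∏ i ∈ range k, a i = Real.exp (Real.log (∏ i ∈ range k, a i)) :=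
          (Real.exp_log hpa).symm
      _ ≤ Real.exp (Real.log (∏ i ∈ range k, b i)) := Real.exp_le_exp.mpr hloga
      _ = ∏ i ∈ range k, b i := Real.exp_log hpb
  · -- some a i = 0, so the product of a's vanishes
    push_neg at hpos
    obtain ⟨j, hjk, hja⟩ := hpos
    have hja0 : a j = 0 := le_antisymm hja (ha0 j)
    have : ∏ i ∈ range k, a i = 0 :=
      Finset.prod_eq_zero (mem_range.mpr hjk) hja0
    rw [this]
    exact Finset.prod_nonneg fun i _ => hb0 i

private lemma eigDesc_antitone {d : ℕ} {A : Matrix (Fin d) (Fin d) ℂ} (hA : A.IsHermitian) :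
    Antitone (eigDesc hA) := fun i j hij =>
  Tuple.monotone_sort hA.eigenvalues (Fin.rev_le_rev.mpr hij)

private lemma filter_sum_eq {d : ℕ} (f : Fin d → ℝ) {k : ℕ} (hk : k ≤ d) :
    ∑ i ∈ Finset.univ.filter (fun i : Fin d => (i : ℕ) < k), f i
      = ∑ n ∈ range k, (fun n => if h : n < d then f ⟨n, h⟩ else 0) n := by
  rw [Finset.sum_filter]
  have h1 : ∑ i : Fin d, (if (i : ℕ) < k then f i else 0)
      = ∑ n ∈ range d, (if n < k then (if h : n < d then f ⟨n, h⟩ else 0) else 0) := by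
    rw [← Fin.sum_univ_eq_sum_range (fun n => if n < k then (if h : n < d then f ⟨n, h⟩ else 0) else 0) d]
    apply Finset.sum_congr rfl
    intro i _
    simp [i.isLt]
  rw [h1, ← Finset.sum_filter]
  congr 1
  ext n
  simp only [mem_filter, mem_range]
  omega

private lemma filter_prod_eq {d : ℕ} (f : Fin d → ℝ) {k : ℕ} (hk : k ≤ d) :
    ∏ i ∈ Finset.univ.filter (fun i : Fin d => (i : ℕ) < k), f i
      = ∏ n ∈ range k, (fun n => if h : n < d then f ⟨n, h⟩ else 0) n := by
  rw [Finset.prod_filter]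
  have h1 : ∏ i : Fin d, (if (i : ℕ) < k then f i else 1)
      = ∏ n ∈ range d, (if n < k then (if h : n < d then f ⟨n, h⟩ else 0) else 1) := by
    rw [← Fin.prod_univ_eq_prod_range (fun n => if n < k then (if h : n < d then f ⟨n, h⟩ else 0) else 1) d]
    apply Finset.prod_congr rfl
    intro i _
    simp [i.isLt]
  rw [h1, ← Finset.prod_filter]
  congr 1
  ext n
  simp only [mem_filter, mem_range]
  omega

private lemma pad_nonneg {d : ℕ} (f : Fin d → ℝ) (hf0 : ∀ i, 0 ≤ f i) :
    ∀ n, 0 ≤ (fun n => if h : n < d then f ⟨n, h⟩ else 0) n := by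
  intro n
  by_cases h : n < d
  · simp only [dif_pos h]; exact hf0 _
  · simp only [dif_neg h]; exact le_refl 0

private lemma pad_antitone {d : ℕ} (f : Fin d → ℝ) (hf : Antitone f) (hf0 : ∀ i, 0 ≤ f i) :
    Antitone (fun n => if h : n < d then f ⟨n, h⟩ else 0) := by
  intro m n hmn
  by_cases hn : n < d
  · have hm : m < d := lt_of_le_of_lt hmn hn
    simp only [dif_pos hn, dif_pos hm]
    exact hf (show (⟨m, hm⟩ : Fin d) ≤ ⟨n, hn⟩ from hmn)
  · simp only [dif_neg hn]
    exact pad_nonneg f hf0 m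

/-- **Proposition 4.3.** For positive semi-definite `A, B`: `λ(A) ≺_{wlog} λ(B)`
(i.e. `∏_{i<k} λ_i(A) ≤ ∏_{i<k} λ_i(B)` for all `k ∈ [d]`) if and only if
`‖A^p‖_(k) ≤ ‖B^p‖_(k)` for all `p > 0` and all `k ∈ [d]`, where the Ky Fan `k`-norm of
`X^p` for positive semi-definite `X` is `∑_{i<k} λ_i(X)^p`. -/
theorem weak_log_majorization_iff_kyfan_powers
    {d : ℕ} {A B : Matrix (Fin d) (Fin d) ℂ} (hA : A.PosSemidef) (hB : B.PosSemidef) :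
    (∀ k, k ≤ d →
      ∏ i ∈ Finset.univ.filter (fun i : Fin d => (i : ℕ) < k), eigDesc hA.1 i ≤
      ∏ i ∈ Finset.univ.filter (fun i : Fin d => (i : ℕ) < k), eigDesc hB.1 i)
    ↔ (∀ p : ℝ, 0 < p → ∀ k, k ≤ d →
      ∑ i ∈ Finset.univ.filter (fun i : Fin d => (i : ℕ) < k), eigDesc hA.1 i ^ p ≤
      ∑ i ∈ Finset.univ.filter (fun i : Fin d => (i : ℕ) < k), eigDesc hB.1 i ^ p) := by
  have hAnn : ∀ i : Fin d, 0 ≤ eigDesc hA.1 i := fun i => hA.eigenvalues_nonneg _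
  have hBnn : ∀ i : Fin d, 0 ≤ eigDesc hB.1 i := fun i => hB.eigenvalues_nonneg _
  constructor
  · intro h p hp k hk
    rw [filter_sum_eq (fun i => eigDesc hA.1 i ^ p) hk,
        filter_sum_eq (fun i => eigDesc hB.1 i ^ p) hk]
    have hconv : ∀ (g : Fin d → ℝ) (n : ℕ),
        (fun n => if h : n < d then g ⟨n, h⟩ ^ p else 0) n
          = ((fun n => if h : n < d then g ⟨n, h⟩ else 0) n) ^ p := by
      intro g n
      by_cases hn : n < d
      · simp [dif_pos hn]
      · simp [dif_neg hn, Real.zero_rpow hp.ne']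
    have := fwd (fun n => if h : n < d then eigDesc hA.1 ⟨n, h⟩ else 0)
      (fun n => if h : n < d then eigDesc hB.1 ⟨n, h⟩ else 0)
      (pad_antitone _ (eigDesc_antitone hA.1) hAnn)
      (pad_nonneg _ hAnn) (pad_nonneg _ hBnn) k
      (fun l hl => by
        rw [← filter_prod_eq (eigDesc hA.1) (hl.trans hk),
            ← filter_prod_eq (eigDesc hB.1) (hl.trans hk)]
        exact h l (hl.trans hk)) p hp
    calc ∑ n ∈ Finset.range k, (fun n => if h : n < d then eigDesc hA.1 ⟨n, h⟩ ^ p else 0) n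
        = ∑ n ∈ Finset.range k,
            ((fun n => if h : n < d then eigDesc hA.1 ⟨n, h⟩ else 0) n) ^ p :=
          Finset.sum_congr rfl fun n _ => hconv (eigDesc hA.1) n
      _ ≤ ∑ n ∈ Finset.range k,
            ((fun n => if h : n < d then eigDesc hB.1 ⟨n, h⟩ else 0) n) ^ p := this
      _ = ∑ n ∈ Finset.range k,
            (fun n => if h : n < d then eigDesc hB.1 ⟨n, h⟩ ^ p else 0) n :=
          (Finset.sum_congr rfl fun n _ => hconv (eigDesc hB.1) n).symm
  · intro h k hk
    rw [filter_prod_eq (eigDesc hA.1) hk, filter_prod_eq (eigDesc hB.1) hk]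
    apply bwd _ _ k (pad_nonneg _ hAnn) (pad_nonneg _ hBnn)
    intro p hp
    have := h p hp k hk
    rw [filter_sum_eq (fun i => eigDesc hA.1 i ^ p) hk,
        filter_sum_eq (fun i => eigDesc hB.1 i ^ p) hk] at this
    have hconv : ∀ (g : Fin d → ℝ) (n : ℕ),
        (fun n => if h : n < d then g ⟨n, h⟩ ^ p else 0) n
          = ((fun n => if h : n < d then g ⟨n, h⟩ else 0) n) ^ p := by
      intro g n
      by_cases hn : n < d
      · simp [dif_pos hn]
      · simp [dif_neg hn, Real.zero_rpow hp.ne']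
    calc ∑ n ∈ Finset.range k,
          ((fun n => if h : n < d then eigDesc hA.1 ⟨n, h⟩ else 0) n) ^ p
        = ∑ n ∈ Finset.range k,
            (fun n => if h : n < d then eigDesc hA.1 ⟨n, h⟩ ^ p else 0) n :=
          (Finset.sum_congr rfl fun n _ => hconv (eigDesc hA.1) n).symm
      _ ≤ ∑ n ∈ Finset.range k,
            (fun n => if h : n < d then eigDesc hB.1 ⟨n, h⟩ ^ p else 0) n := this
      _ = ∑ n ∈ Finset.range k,
            ((fun n => if h : n < d then eigDesc hB.1 ⟨n, h⟩ else 0) n) ^ p :=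
          Finset.sum_congr rfl fun n _ => hconv (eigDesc hB.1) n
end
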